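/- arXiv:2412.10221 — 5 statements merged into one kernel-verified Lean document; each statement's English description precedes it below -/
import Mathlib

section
/- Every separable Baire topological linear space E (a real topological vector space, not necessarily locally convex) is Weak Asplund: every continuous convex function f : D → ℝ defined on a nonempty open convex subset D of E is Gâteaux differentiable at every point of some dense Gδ subset of D. -/
open Filter Topology Bornology TopologicalSpace

section Definitions

variable {E : Type*} [AddCommGroup E] [Module ℝ E] [TopologicalSpace E]

/-- A function `f` (thought of as a convex function on an open convex set containing `x₀`)
is Gâteaux differentiable at `x₀` if there is a continuous linear functional `L` such that
for every direction `x` and every `ε > 0` there is `δ > 0` with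
`|(f (x₀ + t • x) - f x₀) / t - L x| < ε` whenever `0 < |t| < δ`. -/
def GateauxDiffAt (f : E → ℝ) (x₀ : E) : Prop :=
  ∃ L : E →L[ℝ] ℝ, ∀ x : E, ∀ ε : ℝ, 0 < ε → ∃ δ : ℝ, 0 < δ ∧ ∀ t : ℝ,
    0 < |t| → |t| < δ → |(f (x₀ + t • x) - f x₀) / t - L x| < ε

/-- A function `f` is Fréchet differentiable at `x₀` if there is a continuous linear
functional `L` such that for every (von Neumann) bounded set `B` and every `ε > 0` there is
`δ > 0` with `|(f (x₀ + t • x) - f x₀) / t - L x| < ε` for all `x ∈ B`, whenever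
`0 < |t| < δ`. -/
def FrechetDiffAt (f : E → ℝ) (x₀ : E) : Prop :=
  ∃ L : E →L[ℝ] ℝ, ∀ B : Set E, IsVonNBounded ℝ B → ∀ ε : ℝ, 0 < ε →
    ∃ δ : ℝ, 0 < δ ∧ ∀ t : ℝ, 0 < |t| → |t| < δ →
      ∀ x ∈ B, |(f (x₀ + t • x) - f x₀) / t - L x| < ε

end Definitions

/-- `E` is Weak Asplund: every continuous convex function on a nonempty open convex set `D`
is Gâteaux differentiable at every point of a set which is a dense `Gδ` subset of `D`. -/
def IsWeakAsplund (E : Type*) [AddCommGroup E] [Module ℝ E] [TopologicalSpace E] : Prop :=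
  ∀ (D : Set E) (f : E → ℝ), D.Nonempty → IsOpen D → Convex ℝ D →
    ContinuousOn f D → ConvexOn ℝ D f →
    ∃ G : Set E, G ⊆ D ∧ IsGδ (Subtype.val ⁻¹' G : Set D) ∧
      Dense (Subtype.val ⁻¹' G : Set D) ∧ ∀ x ∈ G, GateauxDiffAt f x

set_option linter.unusedSectionVars false

open Filter Topology Bornology TopologicalSpace

section AuxWA

variable {E : Type*} [AddCommGroup E] [Module ℝ E] [TopologicalSpace E]
  [IsTopologicalAddGroup E] [ContinuousSMul ℝ E]
variable {D : Set E} {f : E → ℝ} {x : E}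

private lemma lineWA_cont (x w : E) : Continuous (fun t : ℝ => x + t • w) :=
  continuous_const.add (continuous_id.smul continuous_const)

private lemma lineWA_convexOn (hfcv : ConvexOn ℝ D f) (x w : E) :
    ConvexOn ℝ {t : ℝ | x + t • w ∈ D} (fun t : ℝ => f (x + t • w)) := by
  have he : ∀ t : ℝ, (AffineMap.lineMap x (x + w)) t = x + t • w := by
    intro t
    rw [AffineMap.lineMap_apply]
    simp [vsub_eq_sub, vadd_eq_add, add_sub_cancel_left, add_comm]
  have h := hfcv.comp_affineMap (AffineMap.lineMap x (x + w))
  have hset : {t : ℝ | x + t • w ∈ D} = (AffineMap.lineMap x (x + w)) ⁻¹' D := by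
    ext t; simp [he t]
  have hfun : (fun t : ℝ => f (x + t • w)) = f ∘ (AffineMap.lineMap x (x + w)) := by
    funext t; simp [he t]
  rw [hset, hfun]; exact h

/-- slope monotonicity through the base point. -/
private lemma slopeWA_mono (hfcv : ConvexOn ℝ D f) (hx : x ∈ D) (w : E) {s t : ℝ}
    (hs0 : s ≠ 0) (ht0 : t ≠ 0) (hst : s ≤ t)
    (hsD : x + s • w ∈ D) (htD : x + t • w ∈ D) :
    (f (x + s • w) - f x) / s ≤ (f (x + t • w) - f x) / t := by
  have hg := lineWA_convexOn hfcv x w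
  have h0 : (0 : ℝ) ∈ {t : ℝ | x + t • w ∈ D} := by simpa using hx
  have := hg.secant_mono h0 hsD htD hs0 ht0 hst
  simpa using this

private noncomputable def PhiWA (f : E → ℝ) (x w : E) (t : ℝ) : ℝ := (f (x + t • w) - f x) / t

private def SgoodWA (D : Set E) (x w : E) : Set ℝ :=
  {t : ℝ | 0 < t ∧ x + t • w ∈ D ∧ x - t • w ∈ D}

private noncomputable def pdirWA (D : Set E) (f : E → ℝ) (x w : E) : ℝ :=
  sInf (PhiWA f x w '' SgoodWA D x w)

private lemma SgoodWA_neg (D : Set E) (x w : E) : SgoodWA D x (-w) = SgoodWA D x w := by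
  ext t
  simp only [SgoodWA, Set.mem_setOf_eq, smul_neg, ← sub_eq_add_neg, sub_neg_eq_add]
  tauto

private lemma SgoodWA_nonempty (hD : IsOpen D) (hx : x ∈ D) (w : E) :
    (SgoodWA D x w).Nonempty := by
  have hc' : Continuous (fun t : ℝ => x - t • w) :=
    continuous_const.sub (continuous_id.smul continuous_const)
  have hO : IsOpen {t : ℝ | x + t • w ∈ D ∧ x - t • w ∈ D} :=
    ((hD.preimage (lineWA_cont x w)).inter (hD.preimage hc'))
  have h0 : (0 : ℝ) ∈ {t : ℝ | x + t • w ∈ D ∧ x - t • w ∈ D} := by simp [hx]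
  obtain ⟨η, hη, hball⟩ := Metric.isOpen_iff.1 hO 0 h0
  have : η / 2 ∈ {t : ℝ | x + t • w ∈ D ∧ x - t • w ∈ D} := by
    apply hball
    simp only [Metric.mem_ball, Real.dist_eq, sub_zero]
    rw [abs_of_pos (by positivity)]; linarith
  exact ⟨η / 2, by positivity, this.1, this.2⟩

private lemma SgoodWA_down (hDc : Convex ℝ D) (hx : x ∈ D) {w : E} {s t : ℝ}
    (ht : t ∈ SgoodWA D x w) (hs0 : 0 < s) (hst : s ≤ t) : s ∈ SgoodWA D x w := by
  obtain ⟨ht0, htp, htm⟩ := ht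
  have ha : (0:ℝ) ≤ 1 - s / t := by
    have : s / t ≤ 1 := (div_le_one ht0).2 hst
    linarith
  have hb : (0:ℝ) ≤ s / t := by positivity
  have hab : (1 - s / t) + s / t = 1 := by ring
  refine ⟨hs0, ?_, ?_⟩
  · have hmem := hDc hx htp ha hb hab
    have hc : (1 - s / t) • x + (s / t) • (x + t • w) = x + s • w := by
      rw [smul_add, smul_smul, div_mul_cancel₀ _ (ne_of_gt ht0), sub_smul, one_smul]
      abel
    rwa [hc] at hmem
  · have hmem := hDc hx htm ha hb hab
    have hc : (1 - s / t) • x + (s / t) • (x - t • w) = x - s • w := by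
      rw [smul_sub, smul_smul, div_mul_cancel₀ _ (ne_of_gt ht0), sub_smul, one_smul]
      abel
    rwa [hc] at hmem

private lemma PhiWA_bddBelow (hD : IsOpen D) (hfcv : ConvexOn ℝ D f) (hx : x ∈ D) (w : E) :
    BddBelow (PhiWA f x w '' SgoodWA D x w) := by
  obtain ⟨s₀, hs₀⟩ := SgoodWA_nonempty hD hx w
  refine ⟨(f (x + (-s₀) • w) - f x) / (-s₀), ?_⟩
  rintro y ⟨t, ht, rfl⟩
  have hsD : x + (-s₀) • w ∈ D := by rw [neg_smul, ← sub_eq_add_neg]; exact hs₀.2.2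
  exact slopeWA_mono hfcv hx w (by simpa using hs₀.1.ne') ht.1.ne'
    (by linarith [hs₀.1, ht.1]) hsD ht.2.1

private lemma pdirWA_le (hD : IsOpen D) (hfcv : ConvexOn ℝ D f) (hx : x ∈ D) {w : E} {t : ℝ}
    (ht : t ∈ SgoodWA D x w) : pdirWA D f x w ≤ PhiWA f x w t :=
  csInf_le (PhiWA_bddBelow hD hfcv hx w) (Set.mem_image_of_mem _ ht)

private lemma le_pdirWA (hD : IsOpen D) (hfcv : ConvexOn ℝ D f) (hx : x ∈ D) (w : E) {s : ℝ}
    (hs0 : s < 0) (hsD : x + s • w ∈ D) :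
    (f (x + s • w) - f x) / s ≤ pdirWA D f x w := by
  refine le_csInf ((SgoodWA_nonempty hD hx w).image _) ?_
  rintro y ⟨t, ht, rfl⟩
  exact slopeWA_mono hfcv hx w hs0.ne ht.1.ne' (by linarith [ht.1]) hsD ht.2.1


private lemma PhiWA_neg_eq (f : E → ℝ) (x w : E) (s : ℝ) :
    PhiWA f x (-w) s = -((f (x + (-s) • w) - f x) / (-s)) := by
  simp only [PhiWA, smul_neg, ← neg_smul, div_neg, neg_neg]

private lemma pdirWA_nonneg_add (hD : IsOpen D) (hfcv : ConvexOn ℝ D f) (hx : x ∈ D) (w : E) :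
    0 ≤ pdirWA D f x w + pdirWA D f x (-w) := by
  have h : -(pdirWA D f x w) ≤ pdirWA D f x (-w) := by
    refine le_csInf ((SgoodWA_nonempty hD hx (-w)).image _) ?_
    rintro y ⟨s, hs, rfl⟩
    rw [SgoodWA_neg] at hs
    have hkey : (f (x + (-s) • w) - f x) / (-s) ≤ pdirWA D f x w := by
      refine le_pdirWA hD hfcv hx w (by linarith [hs.1]) ?_
      rw [neg_smul, ← sub_eq_add_neg]; exact hs.2.2
    rw [PhiWA_neg_eq]
    linarith
  linarith

private lemma pdirWA_zero (hD : IsOpen D) (hx : x ∈ D) : pdirWA D f x 0 = 0 := by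
  have h1 : ∀ y ∈ PhiWA f x 0 '' SgoodWA D x 0, y = 0 := by
    rintro y ⟨t, _, rfl⟩; simp [PhiWA]
  have h2 := (SgoodWA_nonempty hD hx 0).image (PhiWA f x 0)
  rw [pdirWA, Set.eq_singleton_iff_nonempty_unique_mem.mpr ⟨h2, h1⟩, csInf_singleton]

private lemma pdirWA_add_le (hD : IsOpen D) (hDc : Convex ℝ D) (hfcv : ConvexOn ℝ D f)
    (hx : x ∈ D) (u w : E) :
    pdirWA D f x (u + w) ≤ pdirWA D f x u + pdirWA D f x w := by
  refine le_of_forall_pos_le_add fun ε hε => ?_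
  obtain ⟨yu, ⟨tu, htu, rfl⟩, hyu⟩ := exists_lt_of_csInf_lt
    ((SgoodWA_nonempty hD hx u).image _)
    (show pdirWA D f x u < pdirWA D f x u + ε / 2 by linarith)
  obtain ⟨yw, ⟨tw, htw, rfl⟩, hyw⟩ := exists_lt_of_csInf_lt
    ((SgoodWA_nonempty hD hx w).image _)
    (show pdirWA D f x w < pdirWA D f x w + ε / 2 by linarith)
  set τ := min tu tw with hτdef
  have hτ : 0 < τ := lt_min htu.1 htw.1
  have hτu : τ ∈ SgoodWA D x u := SgoodWA_down hDc hx htu hτ (min_le_left _ _)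
  have hτw : τ ∈ SgoodWA D x w := SgoodWA_down hDc hx htw hτ (min_le_right _ _)
  have hmu : PhiWA f x u τ ≤ PhiWA f x u tu :=
    slopeWA_mono hfcv hx u hτ.ne' htu.1.ne' (min_le_left _ _) hτu.2.1 htu.2.1
  have hmw : PhiWA f x w τ ≤ PhiWA f x w tw :=
    slopeWA_mono hfcv hx w hτ.ne' htw.1.ne' (min_le_right _ _) hτw.2.1 htw.2.1
  have hhalf : (0:ℝ) ≤ (1:ℝ)/2 := by norm_num
  have hmidp : x + (τ / 2) • (u + w) = (1/2 : ℝ) • (x + τ • u) + (1/2 : ℝ) • (x + τ • w) := by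
    rw [smul_add, smul_add, smul_add, smul_smul, smul_smul]
    rw [show (1/2 : ℝ) * τ = τ / 2 by ring]
    module
  have hmidm : x - (τ / 2) • (u + w) = (1/2 : ℝ) • (x - τ • u) + (1/2 : ℝ) • (x - τ • w) := by
    rw [smul_sub, smul_sub, smul_add, smul_smul, smul_smul]
    rw [show (1/2 : ℝ) * τ = τ / 2 by ring]
    module
  have htS : τ / 2 ∈ SgoodWA D x (u + w) := by
    refine ⟨by positivity, ?_, ?_⟩
    · rw [hmidp]; exact hDc hτu.2.1 hτw.2.1 hhalf hhalf (by norm_num)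
    · rw [hmidm]; exact hDc hτu.2.2 hτw.2.2 hhalf hhalf (by norm_num)
  have hfmid : f (x + (τ / 2) • (u + w)) ≤
      (1/2 : ℝ) * f (x + τ • u) + (1/2 : ℝ) * f (x + τ • w) := by
    rw [hmidp]
    simpa using hfcv.2 hτu.2.1 hτw.2.1 hhalf hhalf (by norm_num)
  have hPhi : PhiWA f x (u + w) (τ / 2) ≤ PhiWA f x u τ + PhiWA f x w τ := by
    rw [PhiWA, PhiWA, PhiWA, ← add_div, div_le_div_iff₀ (by positivity) hτ]
    nlinarith [hfmid]
  calc pdirWA D f x (u + w) ≤ PhiWA f x (u + w) (τ / 2) := pdirWA_le hD hfcv hx htS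
    _ ≤ PhiWA f x u τ + PhiWA f x w τ := hPhi
    _ ≤ PhiWA f x u tu + PhiWA f x w tw := by linarith
    _ ≤ pdirWA D f x u + pdirWA D f x w + ε := by linarith

private lemma pdirWA_smul_le (hD : IsOpen D) (hfcv : ConvexOn ℝ D f)
    (hx : x ∈ D) (w : E) {c : ℝ} (hc : 0 < c) :
    pdirWA D f x (c • w) ≤ c * pdirWA D f x w := by
  refine le_of_forall_pos_le_add fun ε hε => ?_
  obtain ⟨y, ⟨t, ht, rfl⟩, hy⟩ := exists_lt_of_csInf_lt
    ((SgoodWA_nonempty hD hx w).image _)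
    (show pdirWA D f x w < pdirWA D f x w + ε / c by
      have := div_pos hε hc; linarith)
  have hS : t / c ∈ SgoodWA D x (c • w) := by
    refine ⟨div_pos ht.1 hc, ?_, ?_⟩
    · rw [smul_smul, div_mul_cancel₀ _ hc.ne']; exact ht.2.1
    · rw [smul_smul, div_mul_cancel₀ _ hc.ne']; exact ht.2.2
  have hPhi : PhiWA f x (c • w) (t / c) = c * PhiWA f x w t := by
    rw [PhiWA, PhiWA, smul_smul, div_mul_cancel₀ _ hc.ne']
    field_simp
  calc pdirWA D f x (c • w) ≤ PhiWA f x (c • w) (t / c) := pdirWA_le hD hfcv hx hS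
    _ = c * PhiWA f x w t := hPhi
    _ ≤ c * pdirWA D f x w + ε := by
        have h1 := mul_le_mul_of_nonneg_left hy.le hc.le
        rw [mul_add, mul_div_cancel₀ _ hc.ne'] at h1
        linarith

private lemma pdirWA_smul (hD : IsOpen D) (hfcv : ConvexOn ℝ D f)
    (hx : x ∈ D) (w : E) {c : ℝ} (hc : 0 < c) :
    pdirWA D f x (c • w) = c * pdirWA D f x w := by
  have h1 := pdirWA_smul_le hD hfcv hx w hc
  have h2 := pdirWA_smul_le hD hfcv hx (c • w) (inv_pos.2 hc)
  rw [inv_smul_smul₀ hc.ne'] at h2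
  have h3 := mul_le_mul_of_nonneg_left h2 hc.le
  rw [← mul_assoc, mul_inv_cancel₀ hc.ne', one_mul] at h3
  linarith

private lemma pdirWA_small (hD : IsOpen D) (hfc : ContinuousOn f D)
    (hfcv : ConvexOn ℝ D f) (hx : x ∈ D) {ε : ℝ} (hε : 0 < ε) :
    ∀ᶠ w in 𝓝 (0 : E), pdirWA D f x w < ε ∧ -ε < pdirWA D f x w := by
  have hfx : ContinuousAt f x := hfc.continuousAt (hD.mem_nhds hx)
  have h1 : ∀ᶠ y in 𝓝 x, f y ∈ Set.Ioo (f x - ε) (f x + ε) :=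
    hfx (Ioo_mem_nhds (by linarith) (by linarith))
  have h2 : ∀ᶠ y in 𝓝 x, y ∈ D := hD.eventually_mem hx
  have hgood := h1.and h2
  have hplus : Tendsto (fun w : E => x + w) (𝓝 0) (𝓝 x) := by
    have := (continuous_const.add continuous_id :
      Continuous fun w : E => x + w).tendsto (0 : E)
    have h' : Tendsto (fun w : E => x + w) (𝓝 0) (𝓝 (x + 0)) := this
    rwa [add_zero] at h'
  have hminus : Tendsto (fun w : E => x - w) (𝓝 0) (𝓝 x) := by
    have := (continuous_const.sub continuous_id :
      Continuous fun w : E => x - w).tendsto (0 : E)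
    have h' : Tendsto (fun w : E => x - w) (𝓝 0) (𝓝 (x - 0)) := this
    rwa [sub_zero] at h'
  filter_upwards [hplus.eventually hgood, hminus.eventually hgood] with w hp hm
  obtain ⟨hp1, hpD⟩ := hp
  obtain ⟨hm1, hmD⟩ := hm
  rw [Set.mem_Ioo] at hp1 hm1
  have h1S : (1:ℝ) ∈ SgoodWA D x w := by
    refine ⟨one_pos, ?_, ?_⟩
    · simpa using hpD
    · simpa using hmD
  constructor
  · have hle := pdirWA_le hD hfcv hx h1S
    have hPhi : PhiWA f x w 1 = f (x + w) - f x := by simp [PhiWA]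
    rw [hPhi] at hle; linarith [hp1.2]
  · have hneg1 : x + (-1 : ℝ) • w ∈ D := by
      rw [neg_smul, one_smul, ← sub_eq_add_neg]; exact hmD
    have hle := le_pdirWA hD hfcv hx w (by norm_num : (-1:ℝ) < 0) hneg1
    have heq : (f (x + (-1:ℝ) • w) - f x) / (-1) = f x - f (x - w) := by
      rw [neg_smul, one_smul, ← sub_eq_add_neg]; ring
    rw [heq] at hle
    linarith [hm1.2]

private lemma pdirWA_cont (hD : IsOpen D) (hDc : Convex ℝ D) (hfc : ContinuousOn f D)
    (hfcv : ConvexOn ℝ D f) (hx : x ∈ D) : Continuous (pdirWA D f x) := by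
  rw [continuous_iff_continuousAt]
  intro u
  rw [ContinuousAt, Metric.tendsto_nhds]
  intro ε hε
  have hsmall := pdirWA_small hD hfc hfcv hx (half_pos hε)
  have hneg : Tendsto (fun w : E => -w) (𝓝 (0:E)) (𝓝 (0:E)) := by
    have := continuous_neg.tendsto (0 : E); simpa using this
  have hmap : 𝓝 u = Filter.map (fun w : E => u + w) (𝓝 (0:E)) := by
    rw [map_add_left_nhds, add_zero]
  rw [hmap, eventually_map]
  filter_upwards [hsmall, hneg.eventually hsmall] with w h1 h2
  have ha := pdirWA_add_le hD hDc hfcv hx u w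
  have hb := pdirWA_add_le hD hDc hfcv hx (u + w) (-w)
  rw [add_neg_cancel_right] at hb
  rw [Real.dist_eq, abs_lt]
  constructor
  · linarith [h2.1]
  · linarith [h1.1]
private lemma gateauxWA (hD : IsOpen D) (hDc : Convex ℝ D) (hfc : ContinuousOn f D)
    (hfcv : ConvexOn ℝ D f) (hx : x ∈ D) [T2Space E] {v : ℕ → E} (hv : DenseRange v)
    (hU : ∀ n : ℕ, pdirWA D f x (v n) + pdirWA D f x (-(v n)) ≤ 0) :
    GateauxDiffAt f x := by
  have hcont := pdirWA_cont hD hDc hfc hfcv hx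
  have hodd : ∀ w : E, pdirWA D f x (-w) = -pdirWA D f x w := by
    have hq : (fun w => pdirWA D f x w + pdirWA D f x (-w)) = fun _ => (0:ℝ) := by
      refine Continuous.ext_on hv (hcont.add (hcont.comp continuous_neg)) continuous_const ?_
      rintro _ ⟨n, rfl⟩
      exact le_antisymm (hU n) (pdirWA_nonneg_add hD hfcv hx (v n))
    intro w
    have h := congrFun hq w
    linarith
  have hadd : ∀ u w : E, pdirWA D f x (u + w) = pdirWA D f x u + pdirWA D f x w := by
    intro u w
    have h1 := pdirWA_add_le hD hDc hfcv hx u w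
    have h2 := pdirWA_add_le hD hDc hfcv hx (u + w) (-w)
    rw [add_neg_cancel_right, hodd] at h2
    linarith
  have hsmul : ∀ (c : ℝ) (w : E), pdirWA D f x (c • w) = c * pdirWA D f x w := by
    intro c w
    rcases lt_trichotomy c 0 with hc | hc | hc
    · have h := pdirWA_smul hD hfcv hx w (neg_pos.2 hc)
      calc pdirWA D f x (c • w) = pdirWA D f x (-((-c) • w)) := by rw [neg_smul, neg_neg]
        _ = -pdirWA D f x ((-c) • w) := hodd _
        _ = -((-c) * pdirWA D f x w) := by rw [h]
        _ = c * pdirWA D f x w := by ring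
    · subst hc; rw [zero_smul, pdirWA_zero hD hx, zero_mul]
    · exact pdirWA_smul hD hfcv hx w hc
  set L : E →L[ℝ] ℝ :=
    { toFun := pdirWA D f x
      map_add' := hadd
      map_smul' := by intro c w; simpa using hsmul c w
      cont := hcont } with hLdef
  refine ⟨L, ?_⟩
  intro w ε hε
  obtain ⟨y1, ⟨t₁, ht₁, rfl⟩, h1⟩ := exists_lt_of_csInf_lt
    ((SgoodWA_nonempty hD hx w).image _)
    (show pdirWA D f x w < pdirWA D f x w + ε by linarith)
  obtain ⟨y2, ⟨t₂, ht₂', rfl⟩, h2⟩ := exists_lt_of_csInf_lt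
    ((SgoodWA_nonempty hD hx (-w)).image _)
    (show pdirWA D f x (-w) < pdirWA D f x (-w) + ε by linarith)
  have ht₂ : t₂ ∈ SgoodWA D x w := by rwa [SgoodWA_neg] at ht₂'
  refine ⟨min t₁ t₂, lt_min ht₁.1 ht₂.1, ?_⟩
  intro t ht0 htδ
  have htne : t ≠ 0 := by
    intro h; rw [h, abs_zero] at ht0; exact lt_irrefl _ ht0
  have hLw : L w = pdirWA D f x w := rfl
  rw [hLw, abs_lt]
  rcases htne.lt_or_gt with htneg | htpos
  · -- t < 0
    have habs : |t| = -t := abs_of_neg htneg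
    rw [habs] at htδ
    have hsS : -t ∈ SgoodWA D x w :=
      SgoodWA_down hDc hx ht₂ (neg_pos.2 htneg) (le_of_lt (lt_of_lt_of_le htδ (min_le_right _ _)))
    have hS' : -t ∈ SgoodWA D x (-w) := by rwa [SgoodWA_neg]
    have hQ : PhiWA f x (-w) (-t) = -((f (x + t • w) - f x) / t) := by
      rw [PhiWA]
      rw [show (-t) • (-w) = t • w by rw [neg_smul, smul_neg, neg_neg]]
      rw [div_neg]
    have hup : PhiWA f x (-w) (-t) ≤ PhiWA f x (-w) t₂ :=
      slopeWA_mono hfcv hx (-w) (neg_ne_zero.2 htne) ht₂.1.ne'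
        (le_of_lt (lt_of_lt_of_le htδ (min_le_right _ _))) hS'.2.1 ht₂'.2.1
    have hlow : pdirWA D f x (-w) ≤ PhiWA f x (-w) (-t) := pdirWA_le hD hfcv hx hS'
    have hoddw := hodd w
    constructor
    · linarith
    · linarith
  · -- 0 < t
    have habs : |t| = t := abs_of_pos htpos
    rw [habs] at htδ
    have htS : t ∈ SgoodWA D x w :=
      SgoodWA_down hDc hx ht₁ htpos (le_of_lt (lt_of_lt_of_le htδ (min_le_left _ _)))
    have hup : PhiWA f x w t ≤ PhiWA f x w t₁ :=
      slopeWA_mono hfcv hx w htne ht₁.1.ne'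
        (le_of_lt (lt_of_lt_of_le htδ (min_le_left _ _))) htS.2.1 ht₁.2.1
    have hlowD : x + (-t₂) • w ∈ D := by
      rw [neg_smul, ← sub_eq_add_neg]; exact ht₂.2.2
    have hlow : (f (x + (-t₂) • w) - f x) / (-t₂) ≤ PhiWA f x w t :=
      slopeWA_mono hfcv hx w (neg_ne_zero.2 ht₂.1.ne') htne
        (by linarith [ht₂.1]) hlowD htS.2.1
    have h2' : PhiWA f x (-w) t₂ = -((f (x + (-t₂) • w) - f x) / (-t₂)) := PhiWA_neg_eq f x w t₂
    have hoddw := hodd w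
    have hPhidef : PhiWA f x w t = (f (x + t • w) - f x) / t := rfl
    constructor
    · rw [← hPhidef]; linarith
    · rw [← hPhidef]; linarith
private def UsetWA (D : Set E) (f : E → ℝ) (w : E) (ε : ℝ) : Set E :=
  ⋃ t ∈ Set.Ioi (0:ℝ), ((D ∩ (fun y => y + t • w) ⁻¹' D ∩ (fun y => y - t • w) ⁻¹' D) ∩
    (fun y => f (y + t • w) + f (y - t • w) - 2 * f y) ⁻¹' Set.Iio (ε * t))

private lemma UsetWA_mem {w : E} {ε : ℝ} {y : E} :
    y ∈ UsetWA D f w ε ↔ ∃ t : ℝ, 0 < t ∧ y ∈ D ∧ y + t • w ∈ D ∧ y - t • w ∈ D ∧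
      f (y + t • w) + f (y - t • w) - 2 * f y < ε * t := by
  simp only [UsetWA, Set.mem_iUnion, Set.mem_inter_iff, Set.mem_preimage, Set.mem_Ioi,
    Set.mem_Iio, exists_prop]
  tauto

private lemma UsetWA_isOpen (hD : IsOpen D) (hfc : ContinuousOn f D) (w : E) (ε : ℝ) :
    IsOpen (UsetWA D f w ε) := by
  refine isOpen_biUnion fun t _ => ?_
  have hco : Continuous (fun y : E => y + t • w) := continuous_id.add continuous_const
  have hco' : Continuous (fun y : E => y - t • w) := continuous_id.sub continuous_const
  have hs : IsOpen (D ∩ (fun y => y + t • w) ⁻¹' D ∩ (fun y => y - t • w) ⁻¹' D) :=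
    (hD.inter (hD.preimage hco)).inter (hD.preimage hco')
  refine ContinuousOn.isOpen_inter_preimage ?_ hs isOpen_Iio
  apply ContinuousOn.sub
  · apply ContinuousOn.add
    · exact hfc.comp hco.continuousOn fun y hy => hy.1.2
    · exact hfc.comp hco'.continuousOn fun y hy => hy.2
  · exact continuousOn_const.mul (hfc.mono fun y hy => hy.1.1)

/-- Pigeonhole for convex functions on the real line: somewhere in `[a, b]` the symmetric
second difference quotient is smaller than `ε`. -/
private lemma pigeonWA {J : Set ℝ} {g : ℝ → ℝ} (hg : ConvexOn ℝ J g)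
    {a b a' b' ε : ℝ} (h1 : a' < a) (h2 : a < b) (h3 : b < b')
    (hsub : Set.Icc a' b' ⊆ J) (hε : 0 < ε) :
    ∃ s t : ℝ, 0 < t ∧ a ≤ s - t ∧ s + t ≤ b ∧
      g (s + t) + g (s - t) - 2 * g s < ε * t := by
  have ha'J : a' ∈ J := hsub ⟨le_refl _, by linarith⟩
  have hb'J : b' ∈ J := hsub ⟨by linarith, le_refl _⟩
  set C : ℝ := (g b' - g b) / (b' - b) - (g a - g a') / (a - a') with hCdef
  obtain ⟨k, hk⟩ := exists_nat_gt (C / ε)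
  set K : ℕ := k + 1 with hKdef
  have hKpos : 0 < (K:ℝ) := by positivity
  have hCK : C < K * ε := by
    have hk' : C / ε < (K:ℝ) := by
      have : (k:ℝ) < K := by exact_mod_cast Nat.lt_succ_self k
      linarith
    calc C = (C / ε) * ε := by field_simp
      _ < K * ε := mul_lt_mul_of_pos_right hk' hε
  set h : ℝ := (b - a) / (K + 1) with hhdef
  have hh : 0 < h := by apply div_pos <;> [linarith; positivity]
  set P : ℕ → ℝ := fun i => a + i * h with hPdef
  have hP0 : P 0 = a := by simp [hPdef]
  have hPK1 : P (K + 1) = b := by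
    show a + ((K + 1 : ℕ) : ℝ) * h = b
    rw [hhdef]
    have hK1 : ((K + 1 : ℕ) : ℝ) = (K : ℝ) + 1 := by push_cast; ring
    rw [hK1]
    field_simp
    ring
  have hPmono : ∀ i j : ℕ, i ≤ j → P i ≤ P j := by
    intro i j hij
    show a + (i:ℝ) * h ≤ a + (j:ℝ) * h
    have : (i:ℝ) ≤ j := by exact_mod_cast hij
    nlinarith
  have hPb : ∀ i : ℕ, i ≤ K + 1 → a ≤ P i ∧ P i ≤ b := by
    intro i hi
    constructor
    · rw [← hP0]; exact hPmono 0 i (Nat.zero_le i)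
    · rw [← hPK1]; exact hPmono i (K+1) hi
  have hPJ : ∀ i : ℕ, i ≤ K + 1 → P i ∈ J := by
    intro i hi
    obtain ⟨hl, hr⟩ := hPb i hi
    exact hsub ⟨by linarith, by linarith⟩
  have hPsucc : ∀ i : ℕ, P (i + 1) = P i + h := by
    intro i
    show a + ((i + 1 : ℕ) : ℝ) * h = (a + (i:ℝ) * h) + h
    push_cast; ring
  set σ : ℕ → ℝ := fun i => (g (P (i+1)) - g (P i)) / h with hσdef
  have hfind : ∃ j, j < K ∧ σ (j+1) - σ j < ε := by
    by_contra hcon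
    push_neg at hcon
    have hsum : (K:ℝ) * ε ≤ ∑ j ∈ Finset.range K, (σ (j+1) - σ j) := by
      calc (K:ℝ) * ε = ∑ _j ∈ Finset.range K, ε := by
            rw [Finset.sum_const, Finset.card_range, nsmul_eq_mul]
        _ ≤ _ := Finset.sum_le_sum fun j hj => hcon j (Finset.mem_range.1 hj)
    rw [Finset.sum_range_sub] at hsum
    have hσK : σ K ≤ (g b' - g b) / (b' - b) := by
      have hPKb : P K < b := by
        rw [← hPK1, hPsucc K]; linarith
      have hadj := hg.slope_mono_adjacent (hPJ K (by omega)) hb'J hPKb h3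
      have hbPK : b - P K = h := by rw [← hPK1, hPsucc K]; ring
      have hσKeq : σ K = (g b - g (P K)) / (b - P K) := by
        rw [hσdef]; simp only; rw [hPK1, hbPK]
      rw [hσKeq]
      exact hadj
    have hσ0 : (g a - g a') / (a - a') ≤ σ 0 := by
      have haP1 : a < P 1 := by rw [← hP0, hPsucc 0]; linarith
      have hadj := hg.slope_mono_adjacent ha'J (hPJ 1 (by omega)) h1 haP1
      have hσ0eq : σ 0 = (g (P 1) - g a) / (P 1 - a) := by
        rw [hσdef]; simp only; rw [hP0]
        congr 1
        rw [← hP0, hPsucc 0]; ring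
      rw [hσ0eq]
      exact hadj
    have : (K:ℝ) * ε ≤ C := by rw [hCdef]; linarith
    linarith
  obtain ⟨j, hjK, hjlt⟩ := hfind
  refine ⟨P (j+1), h, hh, ?_, ?_, ?_⟩
  · have : P (j+1) - h = P j := by rw [hPsucc j]; ring
    rw [this, ← hP0]
    exact hPmono 0 j (Nat.zero_le j)
  · have : P (j+1) + h = P (j+2) := by rw [show j+2 = (j+1)+1 from rfl, hPsucc (j+1)]
    rw [this, ← hPK1]
    exact hPmono (j+2) (K+1) (by omega)
  · have he1 : P (j+1) + h = P (j+2) := by rw [show j+2 = (j+1)+1 from rfl, hPsucc (j+1)]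
    have he2 : P (j+1) - h = P j := by rw [hPsucc j]; ring
    rw [he1, he2]
    have hlt' : (g (P (j+2)) - g (P (j+1))) / h - (g (P (j+1)) - g (P j)) / h < ε := hjlt
    rw [← sub_div] at hlt'
    have := (div_lt_iff₀ hh).1 hlt'
    rw [mul_comm] at this
    linarith

private lemma UsetWA_dense (hD : IsOpen D) (hDc : Convex ℝ D) (hfcv : ConvexOn ℝ D f)
    (w : E) {ε : ℝ} (hε : 0 < ε) {x : E} (hx : x ∈ D) {W : Set E} (hW : IsOpen W)
    (hxW : x ∈ W) : ∃ y ∈ W, y ∈ UsetWA D f w ε := by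
  have hgJ : ConvexOn ℝ {s : ℝ | x + s • w ∈ D} (fun s : ℝ => f (x + s • w)) :=
    lineWA_convexOn hfcv x w
  have hIopen : IsOpen {s : ℝ | x + s • w ∈ W ∩ D} := (hW.inter hD).preimage (lineWA_cont x w)
  have h0I : (0:ℝ) ∈ {s : ℝ | x + s • w ∈ W ∩ D} := by simp [hxW, hx]
  obtain ⟨η, hη, hball⟩ := Metric.isOpen_iff.1 hIopen 0 h0I
  have hmemI : ∀ s : ℝ, |s| < η → x + s • w ∈ W ∩ D := by
    intro s hs
    have : s ∈ {s : ℝ | x + s • w ∈ W ∩ D} := hball (by simpa [Real.dist_eq] using hs)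
    exact this
  have hsub : Set.Icc (-(3*η/4)) (3*η/4) ⊆ {s : ℝ | x + s • w ∈ D} := by
    intro s hs
    have : |s| < η := by
      rw [abs_lt]; constructor <;> [linarith [hs.1]; linarith [hs.2]]
    exact (hmemI s this).2
  obtain ⟨s, t, ht, hst1, hst2, hineq⟩ := pigeonWA hgJ
    (show -(3*η/4) < -(η/2) by linarith) (show -(η/2) < η/2 by linarith)
    (show (η/2 : ℝ) < 3*η/4 by linarith) hsub hε
  have hsI : x + s • w ∈ W ∩ D := by
    apply hmemI
    rw [abs_lt]; constructor <;> [linarith; linarith]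
  have hsmD : x + (s + t) • w ∈ D := hsub ⟨by linarith, by linarith⟩
  have hspD : x + (s - t) • w ∈ D := hsub ⟨by linarith, by linarith⟩
  refine ⟨x + s • w, hsI.1, ?_⟩
  rw [UsetWA_mem]
  refine ⟨t, ht, hsI.2, ?_, ?_, ?_⟩
  · rw [add_assoc, ← add_smul]; exact hsmD
  · rw [add_sub_assoc, ← sub_smul]; exact hspD
  · have e1 : x + s • w + t • w = x + (s+t) • w := by rw [add_assoc, ← add_smul]
    have e2 : x + s • w - t • w = x + (s-t) • w := by rw [add_sub_assoc, ← sub_smul]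
    rw [e1, e2]
    exact hineq

end AuxWA

/-- **Sharp's theorem.** Every separable Baire topological linear space (a real topological
vector space, not necessarily locally convex) is Weak Asplund. -/
theorem weakAsplund_of_separable_baire (E : Type*) [AddCommGroup E] [Module ℝ E]
    [TopologicalSpace E] [IsTopologicalAddGroup E] [ContinuousSMul ℝ E] [T2Space E]
    [SeparableSpace E] [BaireSpace E] :
    IsWeakAsplund E := by
  intro D f hne hD hDc hfc hfcv
  have : Nonempty E := ⟨0⟩
  obtain ⟨v, hv⟩ := TopologicalSpace.exists_dense_seq E
  set U : ℕ × ℕ → Set E := fun q => UsetWA D f (v q.1) ((1:ℝ) / (q.2 + 1)) with hUdef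
  set V : ℕ × ℕ → Set E := fun q => U q ∪ (closure D)ᶜ with hVdef
  have hUopen : ∀ q, IsOpen (U q) := fun q => UsetWA_isOpen hD hfc _ _
  have hVopen : ∀ q, IsOpen (V q) := fun q => (hUopen q).union isClosed_closure.isOpen_compl
  have heps : ∀ m : ℕ, (0:ℝ) < 1 / ((m:ℝ) + 1) := fun m => by positivity
  have hVdense : ∀ q, Dense (V q) := by
    intro q
    rw [dense_iff_inter_open]
    intro O hO hOne
    by_cases hOD : (O ∩ D).Nonempty
    · obtain ⟨z, hzO, hzD⟩ := hOD
      obtain ⟨y, hyO, hyU⟩ := UsetWA_dense hD hDc hfcv (v q.1) (heps q.2) hzD hO hzO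
      exact ⟨y, hyO, Or.inl hyU⟩
    · obtain ⟨z, hz⟩ := hOne
      refine ⟨z, hz, Or.inr ?_⟩
      intro hcl
      exact hOD (mem_closure_iff.1 hcl O hO hz)
  have hIdense : Dense (⋂ q, V q) := dense_iInter_of_isOpen hVopen hVdense
  refine ⟨D ∩ ⋂ q, U q, Set.inter_subset_left, ?_, ?_, ?_⟩
  · have hpre : (Subtype.val ⁻¹' (D ∩ ⋂ q, U q) : Set D) = ⋂ q, Subtype.val ⁻¹' (U q) := by
      ext y
      simp only [Set.mem_preimage, Set.mem_inter_iff, Set.mem_iInter]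
      exact ⟨fun h q => h.2 q, fun h => ⟨y.2, h⟩⟩
    rw [hpre]
    exact IsGδ.iInter fun q => ((hUopen q).preimage continuous_subtype_val).isGδ
  · have hpre : (Subtype.val ⁻¹' (⋂ q, V q) : Set D) = Subtype.val ⁻¹' (D ∩ ⋂ q, U q) := by
      ext y
      simp only [Set.mem_preimage, Set.mem_iInter, Set.mem_inter_iff, hVdef, Set.mem_union,
        Set.mem_compl_iff]
      have hyD : (y:E) ∈ D := y.2
      have hycl : (y:E) ∈ closure D := subset_closure hyD
      constructor
      · intro h
        refine ⟨hyD, fun q => ?_⟩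
        rcases h q with h' | h'
        · exact h'
        · exact absurd hycl h'
      · intro h q
        exact Or.inl (h.2 q)
    rw [← hpre]
    exact hIdense.preimage hD.isOpenMap_subtype_val
  · rintro x ⟨hxD, hxU⟩
    rw [Set.mem_iInter] at hxU
    refine gateauxWA hD hDc hfc hfcv hxD hv ?_
    intro n
    by_contra hpos
    push_neg at hpos
    obtain ⟨m, hm⟩ := exists_nat_one_div_lt hpos
    have hUx := hxU (n, m)
    rw [UsetWA_mem] at hUx
    obtain ⟨t, ht, _, hp, hm', hlt⟩ := hUx
    have htS : t ∈ SgoodWA D x (v n) := ⟨ht, hp, hm'⟩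
    have h1 := pdirWA_le hD hfcv hxD htS
    have htS' : t ∈ SgoodWA D x (-(v n)) := by rw [SgoodWA_neg]; exact htS
    have h2 := pdirWA_le hD hfcv hxD htS'
    have hsum : PhiWA f x (v n) t + PhiWA f x (-(v n)) t < 1 / ((m:ℝ) + 1) := by
      have hxm : x + t • (-(v n)) = x - t • (v n) := by rw [smul_neg, ← sub_eq_add_neg]
      rw [PhiWA, PhiWA, hxm, ← add_div, div_lt_iff₀ ht]
      linarith
    linarith
end

section
/- A real locally convex space E is a Gâteaux Differentiability Space (GDS) if and only if every continuous convex function f : E → ℝ (defined on all of E) is Gâteaux differentiable at every point of some dense subset of E. -/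
open Filter Topology Bornology TopologicalSpace

/-- `E` is a Gâteaux Differentiability Space: every continuous convex function on a nonempty
open convex set `D` is Gâteaux differentiable at every point of a set dense in `D`. -/
def IsGDS (E : Type*) [AddCommGroup E] [Module ℝ E] [TopologicalSpace E] : Prop :=
  ∀ (D : Set E) (f : E → ℝ), D.Nonempty → IsOpen D → Convex ℝ D →
    ContinuousOn f D → ConvexOn ℝ D f →
    ∃ G : Set E, G ⊆ D ∧ Dense (Subtype.val ⁻¹' G : Set D) ∧ ∀ x ∈ G, GateauxDiffAt f x

open Set Pointwise in
lemma gateaux_congr {E : Type*} [AddCommGroup E] [Module ℝ E] [TopologicalSpace E]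
    [IsTopologicalAddGroup E] [ContinuousSMul ℝ E]
    {f g : E → ℝ} {O : Set E} (hO : IsOpen O) {x₀ : E} (hx : x₀ ∈ O)
    (heq : ∀ y ∈ O, f y = g y) (h : GateauxDiffAt g x₀) : GateauxDiffAt f x₀ := by
  obtain ⟨L, hL⟩ := h
  refine ⟨L, fun v ε hε => ?_⟩
  obtain ⟨δ, hδ, hδ'⟩ := hL v ε hε
  have hc : Continuous fun t : ℝ => x₀ + t • v := by continuity
  have hm : (fun t : ℝ => x₀ + t • v) ⁻¹' O ∈ 𝓝 (0 : ℝ) := by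
    apply hc.continuousAt.preimage_mem_nhds
    simpa using hO.mem_nhds hx
  obtain ⟨δ₂, hδ₂, hb⟩ := Metric.mem_nhds_iff.1 hm
  refine ⟨min δ δ₂, lt_min hδ hδ₂, fun t ht htlt => ?_⟩
  have h1 : x₀ + t • v ∈ O := hb (by
    simp only [Metric.mem_ball, Real.dist_0_eq_abs]
    exact lt_of_lt_of_le htlt (min_le_right _ _))
  rw [heq _ hx, heq _ h1]
  exact hδ' t ht (lt_of_lt_of_le htlt (min_le_left _ _))

open Set Pointwise in
lemma local_extension {E : Type*} [AddCommGroup E] [Module ℝ E] [TopologicalSpace E]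
    [IsTopologicalAddGroup E] [ContinuousSMul ℝ E] [LocallyConvexSpace ℝ E]
    {D : Set E} {f : E → ℝ} (hD : IsOpen D) (hDconv : Convex ℝ D)
    (hf : ContinuousOn f D) (hfc : ConvexOn ℝ D f) {x₀ : E} (hx₀ : x₀ ∈ D) :
    ∃ U : Set E, IsOpen U ∧ x₀ ∈ U ∧ U ⊆ D ∧
      ∃ g : E → ℝ, Continuous g ∧ ConvexOn ℝ Set.univ g ∧ ∀ y ∈ U, f y = g y := by
  classical
  set M : ℝ := f x₀ + 1 with hM
  -- the convex open sublevel neighborhood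
  set U₁ : Set E := {y | y ∈ D ∧ f y < M} with hU₁
  have hU₁D : U₁ ⊆ D := fun y hy => hy.1
  have hU₁x : x₀ ∈ U₁ := ⟨hx₀, by simp [hM]⟩
  have hU₁conv : Convex ℝ U₁ := hfc.convex_lt M
  have hU₁open : IsOpen U₁ := by
    rw [isOpen_iff_mem_nhds]
    rintro y ⟨hyD, hyf⟩
    have hcy : ContinuousAt f y := hf.continuousAt (hD.mem_nhds hyD)
    have h1 : f ⁻¹' Set.Iio M ∈ 𝓝 y := hcy.preimage_mem_nhds (Iio_mem_nhds hyf)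
    filter_upwards [hD.mem_nhds hyD, h1] with z hz1 hz2
    exact ⟨hz1, hz2⟩
  -- a symmetric convex open neighborhood W of 0 with x₀ + 2•W ⊆ U₁
  have hV0 : (fun v : E => x₀ + (2 : ℝ) • v) ⁻¹' U₁ ∈ 𝓝 (0 : E) := by
    have hc : Continuous fun v : E => x₀ + (2 : ℝ) • v :=
      continuous_const.add (continuous_id.const_smul (2 : ℝ))
    apply hc.continuousAt.preimage_mem_nhds
    simpa using hU₁open.mem_nhds hU₁x
  obtain ⟨C, ⟨hC𝓝, hCconv⟩, hCV⟩ :=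
    (LocallyConvexSpace.convex_basis_zero ℝ E).mem_iff.1 hV0
  set W : Set E := interior (C ∩ -C) with hW
  have hWopen : IsOpen W := isOpen_interior
  have hW0 : (0 : E) ∈ W := by
    rw [mem_interior_iff_mem_nhds]
    have hnC : -C ∈ 𝓝 (0 : E) := by
      have := (Homeomorph.neg E).continuous.continuousAt (x := (0 : E))
      simpa using this.preimage_mem_nhds (by simpa using hC𝓝)
    exact Filter.inter_mem hC𝓝 hnC
  have hWconv : Convex ℝ W := (hCconv.inter hCconv.neg).interior
  have hWsymm : ∀ x ∈ W, -x ∈ W := by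
    intro x hx
    have hset : -(C ∩ -C) = C ∩ -C := by
      ext z; simp only [Set.mem_neg, Set.mem_inter_iff, neg_neg, and_comm]
    have hsub : -W ⊆ W := by
      apply interior_maximal
      · calc -W ⊆ -(C ∩ -C) := Set.neg_subset_neg.2 interior_subset
          _ = C ∩ -C := hset
      · exact hWopen.neg
    exact hsub (Set.neg_mem_neg.2 hx)
  have hW2 : ∀ w ∈ W, x₀ + (2 : ℝ) • w ∈ U₁ := fun w hw =>
    hCV (interior_subset hw).1
  have hWsum : ∀ a ∈ W, ∀ b ∈ W, x₀ + (a + b) ∈ U₁ := by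
    intro a ha b hb
    have hmid : (1/2 : ℝ) • a + (1/2 : ℝ) • b ∈ W :=
      hWconv ha hb (by norm_num) (by norm_num) (by norm_num)
    have := hW2 _ hmid
    have h2 : (2 : ℝ) • ((1/2 : ℝ) • a + (1/2 : ℝ) • b) = a + b := by
      rw [smul_add, smul_smul, smul_smul]; norm_num
    rwa [h2] at this
  have hW1 : ∀ w ∈ W, x₀ + w ∈ U₁ := by
    intro w hw
    have := hWsum w hw 0 hW0
    simpa using this
  -- bounds
  have hub : ∀ y ∈ U₁, f y < M := fun y hy => hy.2
  have hlb : ∀ w ∈ W, f x₀ - 1 < f (x₀ + w) := by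
    intro w hw
    have hw' : -w ∈ W := hWsymm w hw
    have h1 : x₀ + w ∈ D := hU₁D (hW1 w hw)
    have h2 : x₀ + -w ∈ D := hU₁D (hW1 _ hw')
    have hcomb : (1/2 : ℝ) • (x₀ + w) + (1/2 : ℝ) • (x₀ + -w) = x₀ := by
      module
    have := hfc.2 h1 h2 (by norm_num : (0:ℝ) ≤ 1/2) (by norm_num : (0:ℝ) ≤ 1/2)
      (by norm_num)
    rw [hcomb] at this
    have h3 : f (x₀ + -w) < M := hub _ (hW1 _ hw')
    simp only [smul_eq_mul] at this
    simp only [hM] at h3 ⊢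
    linarith
  -- gauge facts
  have habs : Absorbent ℝ W := absorbent_nhds_zero (hWopen.mem_nhds hW0)
  have hWeq : {x : E | gauge W x < 1} = W :=
    gauge_lt_one_eq_self_of_isOpen hWconv hW0 hWopen
  -- Lipschitz estimate
  have hLip : ∀ a ∈ W, ∀ b ∈ W, f (x₀ + a) - f (x₀ + b) ≤ 2 * gauge W (a - b) := by
    intro a ha b hb
    have key : ∀ s : ℝ, gauge W (a - b) < s → f (x₀ + a) - f (x₀ + b) ≤ 2 * s := by
      intro s hs
      have hs0 : 0 < s := lt_of_le_of_lt (gauge_nonneg _) hs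
      set u : E := s⁻¹ • (a - b) with hu
      have huW : u ∈ W := by
        rw [← hWeq]
        show gauge W (s⁻¹ • (a - b)) < 1
        rw [gauge_smul_of_nonneg (by positivity : (0:ℝ) ≤ s⁻¹)]
        rw [smul_eq_mul]
        rw [inv_mul_lt_one₀ hs0]  -- might not exist
        exact hs
      have hw' : x₀ + (a + u) ∈ U₁ := hWsum a ha u huW
      have hcomb : (s/(s+1)) • (x₀ + (a + u)) + (1/(s+1)) • (x₀ + b) = x₀ + a := by
        rw [hu]
        match_scalars <;> (field_simp; try ring)
      have hconvineq := hfc.2 (hU₁D hw') (hU₁D (hW1 b hb))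
        (by positivity : (0:ℝ) ≤ s/(s+1)) (by positivity : (0:ℝ) ≤ 1/(s+1))
        (by field_simp)
      rw [hcomb] at hconvineq
      simp only [smul_eq_mul] at hconvineq
      have hA : f (x₀ + (a + u)) < M := hub _ hw'
      have hB : f x₀ - 1 < f (x₀ + b) := hlb b hb
      have hdiff : f (x₀ + (a + u)) - f (x₀ + b) ≤ 2 := by simp only [hM] at hA ⊢; linarith
      have hl0 : (0:ℝ) ≤ s/(s+1) := by positivity
      have hmul : (s/(s+1)) * (f (x₀ + (a + u)) - f (x₀ + b)) ≤ (s/(s+1)) * 2 :=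
        mul_le_mul_of_nonneg_left hdiff hl0
      have hle : (s/(s+1)) * 2 ≤ 2 * s := by
        rw [div_mul_eq_mul_div]
        rw [div_le_iff₀ (by linarith : (0:ℝ) < s + 1)]
        nlinarith
      have hsplit : (1:ℝ)/(s+1) = 1 - s/(s+1) := by field_simp; ring
      rw [hsplit] at hconvineq
      nlinarith [hconvineq, hmul, hle]
    refine le_of_forall_pos_le_add fun ε hε => ?_
    have h2 : gauge W (a-b) < gauge W (a-b) + ε/2 := by linarith
    have := key _ h2
    linarith
  -- inf-convolution
  set g : E → ℝ := fun x => sInf ((fun w => f (x₀ + w) + 2 * gauge W (x - (x₀ + w))) '' W)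
    with hgdef
  have hSne : ∀ x : E, ((fun w => f (x₀ + w) + 2 * gauge W (x - (x₀ + w))) '' W).Nonempty :=
    fun x => ⟨_, Set.mem_image_of_mem _ hW0⟩
  have hSbdd : ∀ x : E, BddBelow ((fun w => f (x₀ + w) + 2 * gauge W (x - (x₀ + w))) '' W) := by
    intro x
    refine ⟨f x₀ - 1, ?_⟩
    rintro r ⟨w, hw, rfl⟩
    have h1 := hlb w hw
    have h2 : (0:ℝ) ≤ gauge W (x - (x₀ + w)) := gauge_nonneg _
    simp only []
    linarith
  have hgle : ∀ x : E, ∀ w ∈ W, g x ≤ f (x₀ + w) + 2 * gauge W (x - (x₀ + w)) :=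
    fun x w hw => csInf_le (hSbdd x) (Set.mem_image_of_mem _ hw)
  -- f = g on x₀ + W
  have hfeq : ∀ a ∈ W, f (x₀ + a) = g (x₀ + a) := by
    intro a ha
    apply le_antisymm
    · apply le_csInf (hSne _)
      rintro r ⟨w, hw, rfl⟩
      have h1 := hLip a ha w hw
      have h2 : x₀ + a - (x₀ + w) = a - w := by abel
      simp only [h2]
      linarith
    · have h1 := hgle (x₀ + a) a ha
      have h2 : x₀ + a - (x₀ + a) = (0 : E) := by abel
      rw [h2, gauge_zero] at h1
      linarith
  -- convexity of g
  have hgconv : ConvexOn ℝ Set.univ g := by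
    refine ⟨convex_univ, ?_⟩
    rintro x - y - c d hc hd hcd
    by_cases hc0 : c = 0
    · subst hc0
      have hd1 : d = 1 := by linarith
      subst hd1
      simp
    by_cases hd0 : d = 0
    · subst hd0
      have hc1 : c = 1 := by linarith
      subst hc1
      simp
    have hc' : 0 < c := hc.lt_of_ne (Ne.symm hc0)
    have hd' : 0 < d := hd.lt_of_ne (Ne.symm hd0)
    refine le_of_forall_pos_le_add fun ε hε => ?_
    obtain ⟨r1, ⟨w1, hw1, rfl⟩, hr1⟩ :=
      exists_lt_of_csInf_lt (hSne x) (lt_add_of_pos_right (g x) hε)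
    obtain ⟨r2, ⟨w2, hw2, rfl⟩, hr2⟩ :=
      exists_lt_of_csInf_lt (hSne y) (lt_add_of_pos_right (g y) hε)
    simp only [] at hr1 hr2
    set w : E := c • w1 + d • w2 with hwdef
    have hwW : w ∈ W := hWconv hw1 hw2 hc hd hcd
    have h1 : g (c • x + d • y) ≤ f (x₀ + w) + 2 * gauge W (c • x + d • y - (x₀ + w)) :=
      hgle _ w hwW
    have h2 : f (x₀ + w) ≤ c * f (x₀ + w1) + d * f (x₀ + w2) := by
      have hmem1 : x₀ + w1 ∈ D := hU₁D (hW1 w1 hw1)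
      have hmem2 : x₀ + w2 ∈ D := hU₁D (hW1 w2 hw2)
      have hcb : c • (x₀ + w1) + d • (x₀ + w2) = x₀ + w := by
        rw [hwdef]
        match_scalars <;> linarith
      have := hfc.2 hmem1 hmem2 hc hd hcd
      rw [hcb] at this
      simpa using this
    have h3 : gauge W (c • x + d • y - (x₀ + w)) ≤
        c * gauge W (x - (x₀ + w1)) + d * gauge W (y - (x₀ + w2)) := by
      have he : c • x + d • y - (x₀ + w) = c • (x - (x₀ + w1)) + d • (y - (x₀ + w2)) := by
        rw [hwdef]
        match_scalars <;> linarith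
      rw [he]
      calc gauge W (c • (x - (x₀ + w1)) + d • (y - (x₀ + w2)))
          ≤ gauge W (c • (x - (x₀ + w1))) + gauge W (d • (y - (x₀ + w2))) :=
            gauge_add_le hWconv habs _ _
        _ = c * gauge W (x - (x₀ + w1)) + d * gauge W (y - (x₀ + w2)) := by
            rw [gauge_smul_of_nonneg hc, gauge_smul_of_nonneg hd, smul_eq_mul, smul_eq_mul]
    have m1 : c * (f (x₀ + w1) + 2 * gauge W (x - (x₀ + w1))) ≤ c * (g x + ε) :=
      mul_le_mul_of_nonneg_left hr1.le hc
    have m2 : d * (f (x₀ + w2) + 2 * gauge W (y - (x₀ + w2))) ≤ d * (g y + ε) :=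
      mul_le_mul_of_nonneg_left hr2.le hd
    have hee : c * ε + d * ε = ε := by rw [← add_mul, hcd, one_mul]
    have hgoal : g (c • x + d • y) ≤ c * g x + d * g y + ε := by nlinarith [h1, h2, h3, m1, m2]
    simpa [smul_eq_mul] using hgoal
  -- (Lipschitz) continuity of g
  have hgLip : ∀ x x' : E, g x ≤ g x' + 2 * gauge W (x - x') := by
    intro x x'
    have h4 : g x - 2 * gauge W (x - x') ≤ g x' := by
      apply le_csInf (hSne x')
      rintro r ⟨w, hw, rfl⟩
      have h2 := hgle x w hw
      have h3 : gauge W (x - (x₀ + w)) ≤ gauge W (x - x') + gauge W (x' - (x₀ + w)) := by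
        have h5 := gauge_add_le hWconv habs (x - x') (x' - (x₀ + w))
        have he : x - x' + (x' - (x₀ + w)) = x - (x₀ + w) := by abel
        rwa [he] at h5
      simp only []
      linarith
    linarith
  have hgcont : Continuous g := by
    rw [continuous_iff_continuousAt]
    intro a
    rw [ContinuousAt, Metric.tendsto_nhds]
    intro ε hε
    have hq : (0:ℝ) < ε / 4 := by linarith
    have hTopen : IsOpen ((fun v => a + v) '' ((ε/4) • W)) :=
      (isOpenMap_add_left a) _ (hWopen.smul₀ (ne_of_gt hq))
    have haT : a ∈ (fun v => a + v) '' ((ε/4) • W) :=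
      ⟨0, ⟨0, hW0, smul_zero _⟩, add_zero a⟩
    filter_upwards [hTopen.mem_nhds haT] with x hx
    obtain ⟨v, hv, rfl⟩ := hx
    have hgv : gauge W v ≤ ε / 4 := gauge_le_of_mem hq.le hv
    have hgv' : gauge W (-v) = gauge W v := gauge_neg hWsymm v
    have e1 : a + v - a = v := by abel
    have e2 : a - (a + v) = -v := by abel
    have b1 : g (a + v) ≤ g a + 2 * gauge W v := by have := hgLip (a + v) a; rwa [e1] at this
    have b2 : g a ≤ g (a + v) + 2 * gauge W v := by
      have := hgLip a (a + v); rwa [e2, hgv'] at this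
    rw [Real.dist_eq, abs_lt]
    constructor <;> linarith
  refine ⟨(fun w => x₀ + w) '' W, (isOpenMap_add_left x₀) W hWopen,
    ⟨0, hW0, add_zero x₀⟩, ?_, g, hgcont, hgconv, ?_⟩
  · rintro y ⟨w, hw, rfl⟩
    exact hU₁D (hW1 w hw)
  · rintro y ⟨w, hw, rfl⟩
    exact hfeq w hw

/-- A real locally convex space `E` is a Gâteaux Differentiability Space if and only if every
continuous convex function `f : E → ℝ` defined on all of `E` is Gâteaux differentiable at
every point of some dense subset of `E`. -/
theorem isGDS_iff_global_convex_gateaux (E : Type*) [AddCommGroup E] [Module ℝ E] [TopologicalSpace E]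
    [IsTopologicalAddGroup E] [ContinuousSMul ℝ E] [LocallyConvexSpace ℝ E] [T2Space E] :
    IsGDS E ↔ ∀ f : E → ℝ, Continuous f → ConvexOn ℝ Set.univ f →
      ∃ G : Set E, Dense G ∧ ∀ x ∈ G, GateauxDiffAt f x := by
  constructor
  · intro h f hf hfc
    obtain ⟨G, -, hGd, hG⟩ := h Set.univ f ⟨0, trivial⟩ isOpen_univ convex_univ
      hf.continuousOn hfc
    refine ⟨G, ?_, hG⟩
    rw [dense_iff_inter_open]
    rintro V hV ⟨v, hv⟩
    have hVo : IsOpen (Subtype.val ⁻¹' V : Set (Set.univ : Set E)) :=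
      hV.preimage continuous_subtype_val
    obtain ⟨⟨w, hw⟩, hw1, hw2⟩ := hGd.inter_open_nonempty _ hVo ⟨⟨v, trivial⟩, hv⟩
    exact ⟨w, hw1, hw2⟩
  · intro H D f hne hD hDconv hf hfc
    have key : ∀ x₀ ∈ D, ∃ U : Set E, IsOpen U ∧ x₀ ∈ U ∧ U ⊆ D ∧
        ∃ T : Set E, Dense T ∧ ∀ x, x ∈ T → x ∈ U → GateauxDiffAt f x := by
      intro x₀ hx₀
      obtain ⟨U, hUo, hxU, hUD, g, hg, hgc, hfg⟩ := local_extension hD hDconv hf hfc hx₀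
      obtain ⟨T, hTd, hT⟩ := H g hg hgc
      exact ⟨U, hUo, hxU, hUD, T, hTd,
        fun x hxT hxU' => gateaux_congr hUo hxU' hfg (hT x hxT)⟩
    choose U hUo hxU hUD T hTd hT using key
    refine ⟨⋃ (x : E) (h : x ∈ D), T x h ∩ U x h, ?_, ?_, ?_⟩
    · rintro y hy
      simp only [Set.mem_iUnion] at hy
      obtain ⟨x, hx, hy1, hy2⟩ := hy
      exact hUD x hx hy2
    · rw [dense_iff_inter_open]
      rintro O hO hOne
      obtain ⟨V, hV, rfl⟩ := isOpen_induced_iff.1 hO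
      obtain ⟨⟨d, hdD⟩, hdV⟩ := hOne
      have hWo : IsOpen (V ∩ U d hdD) := hV.inter (hUo d hdD)
      have hWne : (V ∩ U d hdD).Nonempty := ⟨d, hdV, hxU d hdD⟩
      obtain ⟨z, ⟨hzV, hzU⟩, hzT⟩ := (hTd d hdD).inter_open_nonempty _ hWo hWne
      have hzD : z ∈ D := hUD d hdD hzU
      refine ⟨⟨z, hzD⟩, hzV, ?_⟩
      simp only [Set.mem_preimage, Set.mem_iUnion]
      exact ⟨d, hdD, hzT, hzU⟩
    · intro x hx
      simp only [Set.mem_iUnion] at hx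
      obtain ⟨x₀, hx₀, hx1, hx2⟩ := hx
      exact hT x₀ hx₀ x hx1 hx2
end

section
/- Let E be a real locally convex space that is a Baire space. Then E is Weak Asplund if and only if every continuous convex function f : E → ℝ (defined on all of E) is Gâteaux differentiable at every point of some dense Gδ subset of E. -/
open Filter Topology Bornology TopologicalSpace

open Set Pointwise in
lemma isGδ_preimage {α β : Type*} [TopologicalSpace α] [TopologicalSpace β] {φ : β → α}
    (hφ : Continuous φ) {s : Set α} (hs : IsGδ s) : IsGδ (φ ⁻¹' s) := by
  obtain ⟨T, ho, hc, rfl⟩ := hs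
  refine ⟨(fun t => φ ⁻¹' t) '' T, ?_, hc.image _, ?_⟩
  · rintro _ ⟨t, ht, rfl⟩
    exact (ho t ht).preimage hφ
  · rw [Set.sInter_image, Set.preimage_sInter]

section Topo
open Set Pointwise
variable {α : Type*} [TopologicalSpace α]

lemma isGδ_seq {G : Set α} (h : IsGδ G) :
    ∃ T : ℕ → Set α, (∀ n, IsOpen (T n)) ∧ (⋂ n, T n) = G := by
  obtain ⟨T, hTo, hTc, rfl⟩ := h
  have hins : (insert Set.univ T).Countable := hTc.insert _
  obtain ⟨g, hg⟩ := hins.exists_eq_range ⟨_, mem_insert _ _⟩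
  refine ⟨g, fun n => ?_, ?_⟩
  · have : g n ∈ insert Set.univ T := hg ▸ mem_range_self n
    rcases this with h | h
    · simp [h]
    · exact hTo _ h
  · rw [← sInter_range, ← hg, sInter_insert, univ_inter]

/-- `A` contains, relatively to `U`, a countable intersection of open sets dense in `U`. -/
def ResidualIn (U A : Set α) : Prop :=
  ∃ T : ℕ → Set α, (∀ n, IsOpen (T n)) ∧ (∀ n, U ⊆ closure (T n)) ∧ U ∩ ⋂ n, T n ⊆ A

lemma ResidualIn.mono_left {U V A : Set α} (h : ResidualIn U A) (hVU : V ⊆ U) :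
    ResidualIn V A := by
  obtain ⟨T, h1, h2, h3⟩ := h
  exact ⟨T, h1, fun n => hVU.trans (h2 n), fun x hx => h3 ⟨hVU hx.1, hx.2⟩⟩

/-- Banach category theorem, in the form we need. -/
lemma banach_category {A D : Set α}
    (h : ∀ x ∈ D, ∃ N, IsOpen N ∧ x ∈ N ∧ N ⊆ D ∧ ResidualIn N A) :
    ResidualIn D A := by
  classical
  set S : Set (Set (Set α)) :=
    {𝒱 | (∀ V ∈ 𝒱, IsOpen V ∧ ResidualIn V A) ∧ 𝒱.PairwiseDisjoint id} with hS
  obtain ⟨𝒱, h𝒱max⟩ := zorn_subset S (fun c hcS hchain => by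
    refine ⟨⋃₀ c, ⟨fun V hV => ?_, ?_⟩, fun s hs => subset_sUnion_of_mem hs⟩
    · obtain ⟨𝒱', h𝒱'c, hV𝒱'⟩ := hV
      exact (hcS h𝒱'c).1 V hV𝒱'
    · intro V hV V' hV' hne
      obtain ⟨𝒱₁, h𝒱₁, hV₁⟩ := hV
      obtain ⟨𝒱₂, h𝒱₂, hV₂⟩ := hV'
      rcases hchain.total h𝒱₁ h𝒱₂ with hsub | hsub
      · exact (hcS h𝒱₂).2 (hsub hV₁) hV₂ hne
      · exact (hcS h𝒱₁).2 hV₁ (hsub hV₂) hne)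
  have h𝒱S : 𝒱 ∈ S := h𝒱max.prop
  -- density of the union
  have hdense : D ⊆ closure (⋃₀ 𝒱) := by
    by_contra hcon
    rw [not_subset] at hcon
    obtain ⟨x, hxD, hxcl⟩ := hcon
    obtain ⟨N, hNo, hxN, hND, hNres⟩ := h x hxD
    set V' : Set α := N ∩ (closure (⋃₀ 𝒱))ᶜ with hV'
    have hxV' : x ∈ V' := ⟨hxN, hxcl⟩
    have hV'S : insert V' 𝒱 ∈ S := by
      constructor
      · rintro V (rfl | hV)
        · exact ⟨hNo.inter (isOpen_compl_iff.2 isClosed_closure), hNres.mono_left inter_subset_left⟩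
        · exact h𝒱S.1 V hV
      · intro a ha b hb hab
        have key : ∀ V ∈ 𝒱, Disjoint V' V := by
          intro V hV
          refine Set.disjoint_left.2 fun z hzV' hzV => ?_
          exact hzV'.2 (subset_closure (⟨V, hV, hzV⟩ : z ∈ ⋃₀ 𝒱))
        rcases ha with rfl | ha <;> rcases hb with rfl | hb
        · exact absurd rfl hab
        · exact key b hb
        · exact (key a ha).symm
        · exact h𝒱S.2 ha hb hab
    have : insert V' 𝒱 ⊆ 𝒱 := h𝒱max.2 hV'S (subset_insert _ _)
    have hV'mem : V' ∈ 𝒱 := this (mem_insert _ _)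
    exact hxcl (subset_closure ⟨V', hV'mem, hxV'⟩)
  -- choose witnessing sequences
  have hch : ∀ V : 𝒱, ∃ T : ℕ → Set α, (∀ n, IsOpen (T n)) ∧
      (∀ n, (V : Set α) ⊆ closure (T n)) ∧ (V : Set α) ∩ ⋂ n, T n ⊆ A :=
    fun V => (h𝒱S.1 V V.2).2
  choose T hTo hTd hTA using hch
  refine ⟨fun n => ⋃ V : 𝒱, (T V n ∩ (V : Set α)), fun n => ?_, fun n => ?_, ?_⟩
  · exact isOpen_iUnion fun V => (hTo V n).inter (h𝒱S.1 V V.2).1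
  · refine hdense.trans ?_
    have : ⋃₀ ↑𝒱 ⊆ closure (⋃ V : 𝒱, (T V n ∩ (V : Set α))) := by
      rintro x ⟨V, hV, hxV⟩
      rw [mem_closure_iff]
      intro O hOo hxO
      have hx' : x ∈ closure (T ⟨V, hV⟩ n) := hTd ⟨V, hV⟩ n hxV
      rw [mem_closure_iff] at hx'
      obtain ⟨z, hzO', hzT⟩ := hx' (O ∩ V) (hOo.inter ((h𝒱S.1 V hV).1)) ⟨hxO, hxV⟩
      exact ⟨z, hzO'.1, mem_iUnion.2 ⟨⟨V, hV⟩, hzT, hzO'.2⟩⟩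
    exact closure_minimal this isClosed_closure
  · rintro x ⟨hxD, hx⟩
    simp only [mem_iInter, mem_iUnion] at hx
    obtain ⟨V₀, hxT₀, hxV₀⟩ := hx 0
    have hall : ∀ n, x ∈ T V₀ n := by
      intro n
      obtain ⟨V, hxT, hxV⟩ := hx n
      by_cases hVV : (V : Set α) = (V₀ : Set α)
      · have : V = V₀ := Subtype.ext hVV
        rwa [this] at hxT
      · have hdisj : Disjoint (V : Set α) (V₀ : Set α) :=
          h𝒱S.2 V.2 V₀.2 (by simpa [id] using hVV)
        exact ((Set.disjoint_left.1 hdisj hxV) hxV₀).elim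
    exact hTA V₀ ⟨hxV₀, mem_iInter.2 hall⟩


lemma residualIn_conclusion [BaireSpace α] {D A : Set α} (hDo : IsOpen D) (h : ResidualIn D A) :
    ∃ G : Set α, G ⊆ D ∧ IsGδ (Subtype.val ⁻¹' G : Set D) ∧
      Dense (Subtype.val ⁻¹' G : Set D) ∧ G ⊆ A := by
  obtain ⟨T, hTo, hTd, hTA⟩ := h
  refine ⟨D ∩ ⋂ n, T n, inter_subset_left, ?_, ?_, hTA⟩
  · have : (Subtype.val ⁻¹' (D ∩ ⋂ n, T n) : Set D) = ⋂ n, (Subtype.val ⁻¹' T n : Set D) := by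
      ext x
      simp [x.2]
    rw [this]
    exact .iInter_of_isOpen fun n => (hTo n).preimage continuous_subtype_val
  · -- density via Baire in the ambient space
    have hUd : ∀ n, Dense (T n ∪ (closure D)ᶜ) := by
      intro n x
      by_cases hx : x ∈ closure D
      · exact closure_mono subset_union_left ((closure_mono (hTd n)).trans
          (by rw [closure_closure]) hx)
      · exact subset_closure (Or.inr hx)
    have hB : Dense (⋂ n, (T n ∪ (closure D)ᶜ)) :=
      dense_iInter_of_isOpen (fun n => (hTo n).union (isOpen_compl_iff.2 isClosed_closure)) hUd
    rw [dense_iff_inter_open]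
    rintro U hU ⟨x, hxU⟩
    obtain ⟨O, hOo, rfl⟩ := isOpen_induced_iff.1 hU
    have hOD : (O ∩ D).Nonempty := ⟨x.1, hxU, x.2⟩
    obtain ⟨y, hyO, hyD, hyB⟩ : ∃ y, y ∈ O ∧ y ∈ D ∧ y ∈ ⋂ n, (T n ∪ (closure D)ᶜ) := by
      obtain ⟨y, hy1, hy2⟩ := hB.inter_open_nonempty (O ∩ D) (hOo.inter hDo) ⟨x.1, hxU, x.2⟩
      exact ⟨y, hy1.1, hy1.2, hy2⟩
    have hyT : ∀ n, y ∈ T n := by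
      intro n
      have := mem_iInter.1 hyB n
      rcases this with h | h
      · exact h
      · exact absurd (subset_closure hyD) h
    exact ⟨⟨y, hyD⟩, hyO, hyD, mem_iInter.2 hyT⟩

end Topo

section Defs2
open Set Pointwise

variable {E : Type*} [AddCommGroup E] [Module ℝ E] [TopologicalSpace E]

variable [IsTopologicalAddGroup E] [ContinuousSMul ℝ E]

lemma gateauxDiffAt_congr {f g : E → ℝ} {N : Set E} (hN : IsOpen N) {x : E} (hx : x ∈ N)
    (hfg : ∀ y ∈ N, f y = g y) (h : GateauxDiffAt g x) : GateauxDiffAt f x := by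
  obtain ⟨L, hL⟩ := h
  refine ⟨L, fun v ε hε => ?_⟩
  obtain ⟨δ₁, hδ₁, hδ⟩ := hL v ε hε
  have hcont : ContinuousAt (fun t : ℝ => x + t • v) 0 :=
    (continuous_const.add ((continuous_id.smul continuous_const))).continuousAt
  have hmem : {t : ℝ | x + t • v ∈ N} ∈ 𝓝 (0 : ℝ) := by
    apply hcont.preimage_mem_nhds
    simpa using hN.mem_nhds hx
  obtain ⟨δ₂, hδ₂, hball⟩ := Metric.mem_nhds_iff.1 hmem
  refine ⟨min δ₁ δ₂, lt_min hδ₁ hδ₂, fun t ht htlt => ?_⟩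
  have h1 : x + t • v ∈ N := hball (by simpa [Real.dist_eq] using htlt.trans_le (min_le_right _ _))
  rw [hfg _ h1, hfg _ hx]
  exact hδ t ht (htlt.trans_le (min_le_left _ _))

end Defs2


section Extension
open Set Pointwise

variable {E : Type*} [AddCommGroup E] [Module ℝ E] [TopologicalSpace E]
  [IsTopologicalAddGroup E] [ContinuousSMul ℝ E] [LocallyConvexSpace ℝ E]

lemma exists_global_extension {D : Set E} {f : E → ℝ} (hDo : IsOpen D)
    (hcont : ContinuousOn f D) (hf : ConvexOn ℝ D f) {x₀ : E} (hx₀ : x₀ ∈ D) :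
    ∃ (N : Set E) (g : E → ℝ), IsOpen N ∧ x₀ ∈ N ∧ N ⊆ D ∧ Continuous g ∧
      ConvexOn ℝ Set.univ g ∧ ∀ y ∈ N, f y = g y := by
  classical
  set M : ℝ := f x₀ + 1 with hM
  -- a convex open symmetric neighborhood W of 0 with x₀ + W ⊆ D and f ≤ M there
  obtain ⟨W, hWo, hW0, hWconv, hWsym, hWD, hWub⟩ :
      ∃ W : Set E, IsOpen W ∧ (0 : E) ∈ W ∧ Convex ℝ W ∧ (∀ x ∈ W, -x ∈ W) ∧
        (∀ w ∈ W, x₀ + w ∈ D) ∧ (∀ w ∈ W, f (x₀ + w) ≤ M) := by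
    have hfx : ContinuousAt f x₀ := hcont.continuousAt (hDo.mem_nhds hx₀)
    have hIio : f ⁻¹' (Set.Iio M) ∈ 𝓝 x₀ := hfx (Iio_mem_nhds (by simp [hM]))
    have hU : D ∩ f ⁻¹' (Set.Iio M) ∈ 𝓝 x₀ := inter_mem (hDo.mem_nhds hx₀) hIio
    have hU' : (fun v : E => x₀ + v) ⁻¹' (D ∩ f ⁻¹' (Set.Iio M)) ∈ 𝓝 (0 : E) := by
      apply (continuous_const.add continuous_id).continuousAt.preimage_mem_nhds
      simpa using hU
    obtain ⟨S, ⟨hS𝓝, hSconv⟩, hSsub⟩ :=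
      (LocallyConvexSpace.convex_basis_zero ℝ E).mem_iff.1 hU'
    set V : Set E := interior S with hV
    have hVo : IsOpen V := isOpen_interior
    have hV0 : (0 : E) ∈ V := mem_interior_iff_mem_nhds.2 hS𝓝
    have hVconv : Convex ℝ V := hSconv.interior
    have hVsub : ∀ v ∈ V, x₀ + v ∈ D ∧ f (x₀ + v) < M := fun v hv =>
      hSsub (interior_subset hv)
    refine ⟨V ∩ (-V), hVo.inter hVo.neg, ⟨hV0, by simpa using hV0⟩,
      hVconv.inter (hVconv.neg), ?_, ?_, ?_⟩
    · rintro x ⟨h1, h2⟩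
      exact ⟨by simpa using h2, by simpa using h1⟩
    · exact fun w hw => (hVsub w hw.1).1
    · exact fun w hw => (hVsub w hw.1).2.le
  have habs : Absorbent ℝ W := absorbent_nhds_zero (hWo.mem_nhds hW0)
  set p : E → ℝ := gauge W with hp
  have padd : ∀ x y, p (x + y) ≤ p x + p y := gauge_add_le hWconv habs
  have pneg : ∀ x, p (-x) = p x := gauge_neg hWsym
  have pnonneg : ∀ x, 0 ≤ p x := gauge_nonneg
  have psmul : ∀ (a : ℝ), 0 ≤ a → ∀ x, p (a • x) = a * p x := by
    intro a ha x
    rw [hp, gauge_smul_of_nonneg ha, smul_eq_mul]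
  have plt_mem : ∀ x, p x < 1 → x ∈ W := fun x hx =>
    gauge_lt_one_subset_self hWconv hW0 habs hx
  -- lower bound for f on x₀ + W
  have hWlb : ∀ w ∈ W, f x₀ - 1 ≤ f (x₀ + w) := by
    intro w hw
    have hw' : -w ∈ W := hWsym w hw
    have h1 : x₀ + w ∈ D := hWD w hw
    have h2 : x₀ + (-w) ∈ D := hWD _ hw'
    have := hf.2 h1 h2 (by norm_num : (0:ℝ) ≤ 1/2) (by norm_num : (0:ℝ) ≤ 1/2) (by norm_num)
    have heq : (1/2 : ℝ) • (x₀ + w) + (1/2 : ℝ) • (x₀ + (-w)) = x₀ := by module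
    rw [heq, smul_eq_mul, smul_eq_mul] at this
    have hub := hWub _ hw'
    simp only [hM] at hub this ⊢
    linarith
  -- the neighborhood C
  set halfW : Set E := (2 : ℝ)⁻¹ • W with hhW
  set C : Set E := (fun w => x₀ + w) '' halfW with hC
  have hhalf : halfW ⊆ W := by
    rintro _ ⟨w, hw, rfl⟩
    have := hWconv hw hW0 (by norm_num : (0:ℝ) ≤ 2⁻¹) (by norm_num : (0:ℝ) ≤ 2⁻¹) (by norm_num)
    simpa using this
  have hCopen : IsOpen C := (isOpenMap_add_left x₀) _ (hWo.smul₀ (by norm_num))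
  have hx₀C : x₀ ∈ C := ⟨0, ⟨0, hW0, by simp⟩, by simp⟩
  have hCD : C ⊆ D := by
    rintro _ ⟨w, hw, rfl⟩
    exact hWD w (hhalf hw)
  have hCconv : Convex ℝ C := (hWconv.smul _).translate x₀
  have hCp : ∀ y ∈ C, p (y - x₀) ≤ 1/2 := by
    rintro _ ⟨w, hw, rfl⟩
    have : x₀ + w - x₀ = w := by abel
    rw [this]
    refine gauge_le_of_mem (by norm_num) ?_
    convert hw using 2
    norm_num
  have hCW : ∀ y ∈ C, y - x₀ ∈ W := by
    intro y hy
    exact plt_mem _ ((hCp y hy).trans_lt (by norm_num))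
  -- Lipschitz estimate on C
  have hlip : ∀ u ∈ C, ∀ v ∈ C, f u - f v ≤ 8 * p (u - v) := by
    intro u hu v hv
    have key : ∀ ε : ℝ, 0 < ε → f u - f v ≤ 8 * p (u - v) + 8 * ε := by
      intro ε hε
      set t : ℝ := p (u - v) with ht
      have htnn : 0 ≤ t := pnonneg _
      set s : ℝ := (4 * (t + ε))⁻¹ with hs
      have hs0 : 0 < s := by positivity
      set z : E := u + s • (u - v) with hz
      have hzx : z - x₀ = (u - x₀) + s • (u - v) := by rw [hz]; abel
      have hpz : p (z - x₀) < 1 := by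
        have h1 : p (z - x₀) ≤ p (u - x₀) + p (s • (u - v)) := by
          rw [hzx]; exact padd _ _
        have h2 : p (s • (u - v)) = s * t := by rw [psmul s hs0.le, ht]
        have h3 : s * (t + ε) = 4⁻¹ := by
          rw [hs]; field_simp
        have h4 : s * t < 2⁻¹ := by nlinarith
        have h5 := hCp u hu
        linarith
      have hzW : z - x₀ ∈ W := plt_mem _ hpz
      have hxz : x₀ + (z - x₀) = z := by abel
      have hzD : z ∈ D := by have := hWD _ hzW; rwa [hxz] at this
      have hfz : f z ≤ M := by have := hWub _ hzW; rwa [hxz] at this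
      have hvD : v ∈ D := hCD hv
      have hfv : f x₀ - 1 ≤ f v := by
        have := hWlb _ (hCW v hv)
        have hxv : x₀ + (v - x₀) = v := by abel
        rwa [hxv] at this
      set a : ℝ := (1 + s)⁻¹ with ha
      have h1s : (0:ℝ) < 1 + s := by linarith
      have ha0 : 0 ≤ a := by positivity
      have hb0 : 0 ≤ s * a := by positivity
      have hab : a + s * a = 1 := by rw [ha]; field_simp
      have hcomb : a • z + (s * a) • v = u := by
        rw [hz, ha]
        match_scalars <;> field_simp <;> ring
      have hconv := hf.2 hzD hvD ha0 hb0 hab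
      rw [hcomb, smul_eq_mul, smul_eq_mul] at hconv
      have hainv : a * (1 + s) = 1 := by rw [ha]; field_simp
      have hsa : a ≤ s⁻¹ := by
        rw [ha]
        exact inv_anti₀ hs0 (by linarith)
      have hsinv : s⁻¹ = 4 * (t + ε) := by rw [hs, inv_inv]
      have h2a : 2 * a ≤ 8 * (t + ε) := by
        rw [hsinv] at hsa; linarith
      have hMv : f z - f v ≤ 2 := by
        rw [hM] at hfz; linarith
      -- f u ≤ a f z + s a f v, and 1 - s*a = a
      have hsa' : s * a = 1 - a := by linarith
      rw [hsa'] at hconv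
      nlinarith [mul_le_mul_of_nonneg_left hMv ha0]
    refine le_of_forall_pos_le_add fun ε hε => ?_
    have := key (ε / 8) (by positivity)
    linarith
  -- the extension g via inf-convolution
  set g : E → ℝ := fun y => sInf ((fun u => f u + 8 * p (y - u)) '' C) with hg
  have hlb : ∀ y : E, ∀ r ∈ (fun u => f u + 8 * p (y - u)) '' C, f x₀ - 1 ≤ r := by
    rintro y _ ⟨u, hu, rfl⟩
    have h1 : f x₀ - 1 ≤ f u := by
      have := hWlb _ (hCW u hu)
      have hxu : x₀ + (u - x₀) = u := by abel
      rwa [hxu] at this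
    have := pnonneg (y - u)
    simp only []
    nlinarith
  have hbdd : ∀ y : E, BddBelow ((fun u => f u + 8 * p (y - u)) '' C) :=
    fun y => ⟨f x₀ - 1, fun r hr => hlb y r hr⟩
  have hnee : ∀ y : E, ((fun u => f u + 8 * p (y - u)) '' C).Nonempty :=
    fun y => ⟨_, mem_image_of_mem _ hx₀C⟩
  have hgle : ∀ y : E, ∀ u ∈ C, g y ≤ f u + 8 * p (y - u) :=
    fun y u hu => csInf_le (hbdd y) (mem_image_of_mem _ hu)
  have hgex : ∀ y : E, ∀ ε : ℝ, 0 < ε → ∃ u ∈ C, f u + 8 * p (y - u) < g y + ε := by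
    intro y ε hε
    have hlt : sInf ((fun u => f u + 8 * p (y - u)) '' C) < g y + ε :=
      lt_add_of_pos_right _ hε
    obtain ⟨r, hr, hrlt⟩ := exists_lt_of_csInf_lt (hnee y) hlt
    obtain ⟨u, hu, rfl⟩ := hr
    exact ⟨u, hu, hrlt⟩
  have hgf : ∀ y ∈ C, f y = g y := by
    intro y hy
    have h1 : g y ≤ f y := by
      have := hgle y y hy
      rw [sub_self] at this
      simpa [hp, gauge_zero] using this
    have h2 : f y ≤ g y := by
      apply le_csInf (hnee y)
      rintro _ ⟨u, hu, rfl⟩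
      show f y ≤ f u + 8 * p (y - u)
      have := hlip y hy u hu
      linarith
    linarith
  have hglip : ∀ y z : E, g y ≤ g z + 8 * p (y - z) := by
    intro y z
    refine le_of_forall_pos_le_add fun ε hε => ?_
    obtain ⟨u, hu, hult⟩ := hgex z ε hε
    have h1 : g y ≤ f u + 8 * p (y - u) := hgle y u hu
    have h2 : p (y - u) ≤ p (y - z) + p (z - u) := by
      have hyu : y - u = (y - z) + (z - u) := by abel
      rw [hyu]; exact padd _ _
    linarith
  have hgcont : Continuous g := by
    rw [continuous_iff_continuousAt]
    intro y
    rw [ContinuousAt, Metric.tendsto_nhds]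
    intro ε hε
    have hWε : (ε/16 : ℝ) • W ∈ 𝓝 (0 : E) := by
      rw [set_smul_mem_nhds_zero_iff (by positivity : (ε/16 : ℝ) ≠ 0)]
      exact hWo.mem_nhds hW0
    have hmem : {z : E | z - y ∈ (ε/16 : ℝ) • W} ∈ 𝓝 y := by
      have : ContinuousAt (fun z : E => z - y) y :=
        (continuous_id.sub continuous_const).continuousAt
      apply this.preimage_mem_nhds
      simpa using hWε
    filter_upwards [hmem] with z hz
    have hpz : p (z - y) ≤ ε/16 := gauge_le_of_mem (by positivity) hz
    have hpz' : p (y - z) ≤ ε/16 := by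
      have h := pneg (z - y)
      rw [neg_sub] at h
      linarith
    have h1 := hglip z y
    have h2 := hglip y z
    rw [Real.dist_eq, abs_sub_lt_iff]
    constructor <;> linarith
  have hgconv : ConvexOn ℝ Set.univ g := by
    refine ⟨convex_univ, fun y₁ _ y₂ _ a b ha hb hab => ?_⟩
    rw [smul_eq_mul, smul_eq_mul]
    refine le_of_forall_pos_le_add fun ε hε => ?_
    obtain ⟨u₁, hu₁, h1⟩ := hgex y₁ (ε/2) (by positivity)
    obtain ⟨u₂, hu₂, h2⟩ := hgex y₂ (ε/2) (by positivity)
    have huC : a • u₁ + b • u₂ ∈ C := hCconv hu₁ hu₂ ha hb hab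
    have hgle' := hgle (a • y₁ + b • y₂) _ huC
    have hdec : a • y₁ + b • y₂ - (a • u₁ + b • u₂) = a • (y₁ - u₁) + b • (y₂ - u₂) := by
      module
    have hpineq : p (a • y₁ + b • y₂ - (a • u₁ + b • u₂)) ≤
        a * p (y₁ - u₁) + b * p (y₂ - u₂) := by
      rw [hdec]
      calc p (a • (y₁ - u₁) + b • (y₂ - u₂)) ≤ p (a • (y₁ - u₁)) + p (b • (y₂ - u₂)) :=
            padd _ _
        _ = a * p (y₁ - u₁) + b * p (y₂ - u₂) := by rw [psmul a ha, psmul b hb]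
    have hfconv := hf.2 (hCD hu₁) (hCD hu₂) ha hb hab
    rw [smul_eq_mul, smul_eq_mul] at hfconv
    have e1 : a * (f u₁ + 8 * p (y₁ - u₁)) ≤ a * (g y₁ + ε/2) :=
      mul_le_mul_of_nonneg_left h1.le ha
    have e2 : b * (f u₂ + 8 * p (y₂ - u₂)) ≤ b * (g y₂ + ε/2) :=
      mul_le_mul_of_nonneg_left h2.le hb
    nlinarith [hgle', hpineq, hfconv, hε]
  exact ⟨C, g, hCopen, hx₀C, hCD, hgcont, hgconv, hgf⟩

end Extension

/-- A Baire real locally convex space `E` is Weak Asplund if and only if every continuous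
convex function `f : E → ℝ` defined on all of `E` is Gâteaux differentiable at every point
of some dense `Gδ` subset of `E`. -/
theorem isWeakAsplund_iff_global_convex_gateaux (E : Type*) [AddCommGroup E] [Module ℝ E] [TopologicalSpace E]
    [IsTopologicalAddGroup E] [ContinuousSMul ℝ E] [LocallyConvexSpace ℝ E] [T2Space E]
    [BaireSpace E] :
    IsWeakAsplund E ↔ ∀ f : E → ℝ, Continuous f → ConvexOn ℝ Set.univ f →
      ∃ G : Set E, IsGδ G ∧ Dense G ∧ ∀ x ∈ G, GateauxDiffAt f x := by
  constructor
  · -- forward direction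
    intro hW f hfc hfconv
    obtain ⟨G, hGsub, hGδ, hGdense, hGdiff⟩ := hW Set.univ f ⟨0, trivial⟩ isOpen_univ
      convex_univ hfc.continuousOn hfconv
    set e : E → (Set.univ : Set E) := fun x => ⟨x, trivial⟩ with he
    have hec : Continuous e := Continuous.subtype_mk continuous_id _
    have hpre : e ⁻¹' (Subtype.val ⁻¹' G) = G := rfl
    refine ⟨G, ?_, ?_, hGdiff⟩
    · rw [← hpre]
      exact isGδ_preimage hec hGδ
    · intro x
      have hx : e x ∈ closure (Subtype.val ⁻¹' G) := hGdense _
      exact (continuous_subtype_val.closure_preimage_subset G) hx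
  · -- reverse direction
    intro H D f hne hDo hDconv hcont hconv
    have hloc : ∀ x ∈ D, ∃ N, IsOpen N ∧ x ∈ N ∧ N ⊆ D ∧
        ResidualIn N {x | GateauxDiffAt f x} := by
      intro x₀ hx₀
      obtain ⟨N, g, hNo, hxN, hND, hgc, hgconv, hfg⟩ :=
        exists_global_extension hDo hcont hconv hx₀
      obtain ⟨G₀, hG₀δ, hG₀d, hG₀diff⟩ := H g hgc hgconv
      obtain ⟨T, hTo, hTeq⟩ := isGδ_seq hG₀δ
      have hsub : ∀ n, G₀ ⊆ T n := by
        intro n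
        rw [← hTeq]
        exact Set.iInter_subset T n
      refine ⟨N, hNo, hxN, hND, T, hTo, fun n => ?_, ?_⟩
      · have hd : Dense (T n) := hG₀d.mono (hsub n)
        exact fun y _ => hd y
      · rintro x ⟨hxN', hxT⟩
        have hxG₀ : x ∈ G₀ := by rw [← hTeq]; exact hxT
        exact gateauxDiffAt_congr hNo hxN' hfg (hG₀diff x hxG₀)
    obtain ⟨G, h1, h2, h3, h4⟩ := residualIn_conclusion hDo (banach_category hloc)
    exact ⟨G, h1, h2, h3, fun x hx => h4 hx⟩
end

section
/- Let E be a separable Baire topological linear space (real topological vector space) and let Y be a separable Fréchet space (separable completely metrizable real locally convex space). Then the product E × Y is Weak Asplund. -/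
open Filter Topology Bornology TopologicalSpace Set

set_option linter.unusedSectionVars false
set_option maxHeartbeats 1000000

/-- A topological space is completely metrizable if its topology is induced by some complete
metric. -/
def CompletelyMetrizable (X : Type*) [t : TopologicalSpace X] : Prop :=
  ∃ m : MetricSpace X, m.toUniformSpace.toTopologicalSpace = t ∧
    @CompleteSpace X m.toUniformSpace

/-- Product of a Baire space with a second-countable Baire space is Baire. -/
theorem baireSpace_prod {X Y : Type*} [TopologicalSpace X] [TopologicalSpace Y]
    [BaireSpace X] [SecondCountableTopology Y] [BaireSpace Y] : BaireSpace (X × Y) := by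
  constructor
  intro F hFo hFd
  rw [dense_iff_inter_open]
  intro W hWo hWne
  obtain ⟨⟨a, b⟩, hab⟩ := hWne
  obtain ⟨U, V, hU, hV, haU, hbV, hUV⟩ := isOpen_prod_iff.1 hWo a b hab
  let ι := {s : Set Y // s ∈ countableBasis Y ∧ s.Nonempty}
  haveI : Countable ι := ((countable_countableBasis Y).mono
    (fun s hs => hs.1 : {s : Set Y | s ∈ countableBasis Y ∧ s.Nonempty} ⊆ countableBasis Y)).to_subtype
  let Ew : ℕ × ι → Set X := fun p => {x | ∃ y ∈ p.2.1, (x, y) ∈ F p.1}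
  have hEo : ∀ p, IsOpen (Ew p) := by
    intro p
    have : Ew p = ⋃ y ∈ p.2.1, (fun x => (x, y)) ⁻¹' F p.1 := by
      ext x; simp [Ew]
    rw [this]
    exact isOpen_biUnion fun y _ => (hFo p.1).preimage (Continuous.prodMk_left y)
  have hEd : ∀ p, Dense (Ew p) := by
    intro p
    rw [dense_iff_inter_open]
    intro O hO hOne
    have hprod : (O ×ˢ p.2.1).Nonempty := hOne.prod p.2.2.2
    obtain ⟨⟨x, y⟩, hxy⟩ := ((hFd p.1).inter_open_nonempty _
      (hO.prod (isOpen_of_mem_countableBasis p.2.2.1)) hprod)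
    exact ⟨x, hxy.1.1, y, hxy.1.2, hxy.2⟩
  have hEdense : Dense (⋂ p, Ew p) := dense_iInter_of_isOpen hEo hEd
  obtain ⟨x, hxU, hxE⟩ := hEdense.inter_open_nonempty U hU ⟨a, haU⟩
  let S : ℕ → Set Y := fun n => {y | (x, y) ∈ F n}
  have hSo : ∀ n, IsOpen (S n) := fun n => (hFo n).preimage (Continuous.prodMk_right x)
  have hSd : ∀ n, Dense (S n) := by
    intro n
    rw [dense_iff_inter_open]
    intro O hO hOne
    obtain ⟨y₀, hy₀⟩ := hOne
    obtain ⟨v, hvB, hyv, hvO⟩ :=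
      (isBasis_countableBasis Y).exists_subset_of_mem_open hy₀ hO
    have hx' : x ∈ Ew (n, ⟨v, hvB, ⟨y₀, hyv⟩⟩) :=
      mem_iInter.1 hxE (n, ⟨v, hvB, ⟨y₀, hyv⟩⟩)
    obtain ⟨y, hyv', hyF⟩ := hx'
    exact ⟨y, hvO hyv', hyF⟩
  have : Dense (⋂ n, S n) := dense_iInter_of_isOpen hSo hSd
  obtain ⟨y, hyV, hyS⟩ := this.inter_open_nonempty V hV ⟨b, hbV⟩
  refine ⟨(x, y), hUV (mk_mem_prod hxU hyV), ?_⟩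
  exact mem_iInter.2 fun n => mem_iInter.1 hyS n

section MazurHelpers
variable {X : Type*} [AddCommGroup X] [Module ℝ X] [TopologicalSpace X]
  [IsTopologicalAddGroup X] [ContinuousSMul ℝ X]

noncomputable def dq (f : X → ℝ) (x v : X) (t : ℝ) : ℝ := (f (x + t • v) - f x) / t

theorem lineConvex {D : Set X} {f : X → ℝ} (hfc : ConvexOn ℝ D f) (x v : X) :
    ConvexOn ℝ {t : ℝ | x + t • v ∈ D} (fun t => f (x + t • v)) := by
  have h := hfc.comp_affineMap (AffineMap.lineMap x (x + v))
  have e1 : {t : ℝ | x + t • v ∈ D} = ⇑(AffineMap.lineMap x (x + v)) ⁻¹' D := by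
    ext t
    simp [AffineMap.lineMap_apply, add_comm]
  have e2 : (fun t : ℝ => f (x + t • v)) = f ∘ ⇑(AffineMap.lineMap x (x + v)) := by
    funext t
    simp [AffineMap.lineMap_apply, add_comm]
  rw [e1, e2]
  exact h

theorem dq_mono {D : Set X} {f : X → ℝ} (hfc : ConvexOn ℝ D f) {x v : X} {t₁ t₂ : ℝ}
    (hx : x ∈ D) (h1 : x + t₁ • v ∈ D) (h2 : x + t₂ • v ∈ D)
    (h10 : t₁ ≠ 0) (h20 : t₂ ≠ 0) (hle : t₁ ≤ t₂) : dq f x v t₁ ≤ dq f x v t₂ := by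
  have hconv := lineConvex hfc x v
  have h0 : (0 : ℝ) ∈ {t : ℝ | x + t • v ∈ D} := by simpa using hx
  have h := hconv.secant_mono h0 h1 h2 h10 h20 hle
  simpa [dq, sub_zero] using h

theorem dq_neg (f : X → ℝ) (x v : X) (t : ℝ) : dq f x (-v) t = - dq f x v (-t) := by
  simp only [dq, smul_neg, ← neg_smul, div_neg, neg_neg]

theorem exists_radius {U : Set X} (hU : IsOpen U) {x : X} (hx : x ∈ U) (v : X) :
    ∃ r > 0, ∀ t : ℝ, |t| < r → x + t • v ∈ U := by
  have hc : Continuous fun t : ℝ => x + t • v :=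
    continuous_const.add (continuous_id.smul continuous_const)
  have hop : IsOpen ((fun t : ℝ => x + t • v) ⁻¹' U) := hU.preimage hc
  have h0 : (0 : ℝ) ∈ (fun t : ℝ => x + t • v) ⁻¹' U := by simpa using hx
  obtain ⟨r, hr, hball⟩ := Metric.isOpen_iff.1 hop 0 h0
  exact ⟨r, hr, fun t ht => hball (by simpa [Real.dist_eq] using ht)⟩

theorem mem_of_seg {D : Set X} (hDc : Convex ℝ D) {x v : X} {s t : ℝ}
    (hs : 0 < s) (hst : s ≤ t) (hx : x ∈ D) (ht : x + t • v ∈ D) : x + s • v ∈ D := by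
  have ht0 : 0 < t := lt_of_lt_of_le hs hst
  have h1 : (0:ℝ) ≤ 1 - s / t := by
    rw [sub_nonneg, div_le_one ht0]; exact hst
  have h2 : (0:ℝ) ≤ s / t := by positivity
  have h3 : (1 - s / t) + s / t = 1 := by ring
  have h := hDc hx ht h1 h2 h3
  have heq : (1 - s / t) • x + (s / t) • (x + t • v) = x + s • v := by
    rw [smul_add, smul_smul, div_mul_cancel₀ _ ht0.ne', ← add_assoc, ← add_smul]
    rw [sub_add_cancel, one_smul]
  rwa [heq] at h

theorem dq_add_le {D : Set X} {f : X → ℝ} (hfc : ConvexOn ℝ D f) {x u w : X} {t : ℝ}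
    (ht : 0 < t) (hu : x + (2*t) • u ∈ D) (hw : x + (2*t) • w ∈ D) :
    dq f x (u + w) t ≤ dq f x u (2*t) + dq f x w (2*t) := by
  have h3 : (1/2 : ℝ) + 1/2 = 1 := by norm_num
  have key := hfc.2 hu hw (by norm_num : (0:ℝ) ≤ 1/2) (by norm_num : (0:ℝ) ≤ 1/2) h3
  have heq : (1/2 : ℝ) • (x + (2*t) • u) + (1/2 : ℝ) • (x + (2*t) • w) = x + t • (u + w) := by
    module
  rw [heq] at key
  simp only [smul_eq_mul] at key
  have h2t : (0:ℝ) < 2*t := by positivity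
  simp only [dq]
  rw [← add_div, div_le_div_iff₀ ht h2t]
  nlinarith [key]

theorem gs_dense {D : Set X} {f : X → ℝ} (hDo : IsOpen D) (hfc : ConvexOn ℝ D f)
    (v : X) (n : ℕ) {O : Set X} (hO : IsOpen O) (hne : (O ∩ D).Nonempty) :
    ∃ z ∈ O ∩ D, ∃ t > 0, z + t • v ∈ D ∧ z + (-t) • v ∈ D ∧
      dq f z v t - dq f z v (-t) < 1/((n:ℝ)+1) := by
  obtain ⟨x₀, hx₀⟩ := hne
  obtain ⟨r, hr, hball⟩ := exists_radius (hO.inter hDo) hx₀ v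
  set φ : ℝ → ℝ := fun s => f (x₀ + s • v) with hφdef
  have hφ : ConvexOn ℝ {u : ℝ | x₀ + u • v ∈ D} φ := lineConvex hfc x₀ v
  have hmem : ∀ s : ℝ, |s| < r → x₀ + s • v ∈ D := fun s hs => (hball s hs).2
  set c : ℝ := 1/((n:ℝ)+1) with hc
  have hcpos : 0 < c := by positivity
  set M : ℝ := (φ (3*r/4) - φ (r/2))/(r/4) - (φ 0 - φ (-(3*r/4)))/(3*r/4) with hM
  obtain ⟨m, hmM⟩ : ∃ m : ℕ, M / c < (m : ℝ) := exists_nat_gt _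
  have hm1 : ((m:ℝ)+1) ≠ 0 := by positivity
  set t : ℝ := r/(2*((m:ℝ)+1)) with htdef
  have ht : 0 < t := by positivity
  set s : ℕ → ℝ := fun i => i * t with hsdef
  have hsle : ∀ i : ℕ, i ≤ m + 1 → 0 ≤ s i ∧ s i ≤ r/2 := by
    intro i hi
    refine ⟨by positivity, ?_⟩
    have h1 : (i:ℝ) ≤ (m:ℝ) + 1 := by exact_mod_cast hi
    have h2 : s i ≤ ((m:ℝ)+1) * t := mul_le_mul_of_nonneg_right h1 ht.le
    have h3 : ((m:ℝ)+1) * t = r/2 := by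
      rw [htdef]; field_simp
    linarith
  have hsr : ∀ i : ℕ, i ≤ m + 1 → |s i| < r := by
    intro i hi
    obtain ⟨h0, h1⟩ := hsle i hi
    rw [abs_of_nonneg h0]; linarith
  have hsm1 : s (m+1) = r/2 := by
    show ((m:ℕ)+1 : ℕ) * t = r/2
    push_cast
    rw [htdef]; field_simp
  have hsucc : ∀ i : ℕ, s (i+1) = s i + t := by
    intro i; show ((i:ℕ)+1 : ℕ) * t = (i:ℝ) * t + t
    push_cast; ring
  set g : ℕ → ℝ := fun i => φ (s (i+1)) - φ (s i) with hg
  have hmemJ : ∀ s' : ℝ, |s'| < r → s' ∈ {u : ℝ | x₀ + u • v ∈ D} := fun s' hs' => hmem s' hs'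
  have hex : ∃ i ∈ Finset.range m, g (i+1) - g i < c * t := by
    by_contra hcon
    push_neg at hcon
    have hsum : ∑ i ∈ Finset.range m, (g (i+1) - g i) = g m - g 0 := Finset.sum_range_sub _ m
    have hlow : (m:ℝ) * (c*t) ≤ g m - g 0 := by
      rw [← hsum]
      calc (m:ℝ) * (c*t) = ∑ _i ∈ Finset.range m, c*t := by
            rw [Finset.sum_const, Finset.card_range, nsmul_eq_mul]
        _ ≤ ∑ i ∈ Finset.range m, (g (i+1) - g i) := Finset.sum_le_sum hcon
    have h34 : |3*r/4| < r := by rw [abs_of_nonneg (by positivity)]; linarith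
    have h34' : |(-(3*r/4))| < r := by rw [abs_neg, abs_of_nonneg (by positivity)]; linarith
    have hmnn : (0:ℝ) ≤ (m:ℝ) := Nat.cast_nonneg m
    have htr : |t| < r := by
      rw [abs_of_nonneg ht.le, htdef, div_lt_iff₀ (by positivity)]
      nlinarith
    have hgm : g m / t ≤ (φ (3*r/4) - φ (r/2))/(r/4) := by
      have h1 : s m < s (m+1) := by rw [hsucc]; linarith
      have h2 : s (m+1) < 3*r/4 := by rw [hsm1]; linarith
      have h := hφ.slope_mono_adjacent (hmemJ (s m) (hsr m (by omega))) (hmemJ (3*r/4) h34) h1 h2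
      have he1 : s (m+1) - s m = t := by rw [hsucc]; ring
      rw [he1, hsm1] at h
      have he2 : 3*r/4 - r/2 = r/4 := by ring
      rw [he2] at h
      have hgmeq : g m = φ (r/2) - φ (s m) := by rw [hg]; simp only [hsm1]
      rw [hgmeq]
      exact h
    have hg0 : (φ 0 - φ (-(3*r/4)))/(3*r/4) ≤ g 0 / t := by
      have h1 : -(3*r/4) < (0:ℝ) := by linarith
      have h := hφ.slope_mono_adjacent (hmemJ (-(3*r/4)) h34') (hmemJ t htr) h1 ht
      have he1 : (0:ℝ) - -(3*r/4) = 3*r/4 := by ring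
      have he2 : t - 0 = t := by ring
      rw [he1, he2] at h
      have he3 : g 0 = φ t - φ 0 := by
        have : s 0 = 0 := by show ((0:ℕ):ℝ) * t = 0; simp
        have h1' : s 1 = t := by rw [hsucc 0, this]; ring
        rw [hg]
        simp only [this, h1']
      rw [he3]
      exact h
    have hgmle : g m ≤ ((φ (3*r/4) - φ (r/2))/(r/4)) * t := (div_le_iff₀ ht).1 hgm
    have hg0le : ((φ 0 - φ (-(3*r/4)))/(3*r/4)) * t ≤ g 0 := (le_div_iff₀ ht).1 hg0
    have hup : g m - g 0 ≤ t * M := by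
      have : t * M = ((φ (3*r/4) - φ (r/2))/(r/4)) * t - ((φ 0 - φ (-(3*r/4)))/(3*r/4)) * t := by
        rw [hM]; ring
      rw [this]
      linarith
    have hMc : (m:ℝ) * c ≤ M := by
      have h1 : (m:ℝ) * (c * t) ≤ t * M := le_trans hlow hup
      nlinarith
    have : (m:ℝ) ≤ M / c := (le_div_iff₀ hcpos).2 hMc
    linarith
  obtain ⟨i, hi, hgi⟩ := hex
  rw [Finset.mem_range] at hi
  have hz1 : x₀ + s (i+1) • v + t • v = x₀ + s (i+2) • v := by
    rw [add_assoc, ← add_smul, ← hsucc (i+1)]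
  have hz2 : x₀ + s (i+1) • v + (-t) • v = x₀ + s i • v := by
    rw [add_assoc, ← add_smul]
    congr 2
    rw [hsucc i]; ring
  refine ⟨x₀ + s (i+1) • v, hball _ (hsr (i+1) (by omega)), t, ht, ?_, ?_, ?_⟩
  · rw [hz1]; exact hmem _ (hsr (i+2) (by omega))
  · rw [hz2]; exact hmem _ (hsr i (by omega))
  · have hdq1 : dq f (x₀ + s (i+1) • v) v t = g (i+1) / t := by
      rw [dq, hz1, hg]
    have hdq2 : dq f (x₀ + s (i+1) • v) v (-t) = g i / t := by
      rw [dq, hz2]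
      rw [hg]
      rw [div_neg, ← neg_div, neg_sub]
    rw [hdq1, hdq2, div_sub_div_same, div_lt_iff₀ ht]
    exact hgi

theorem gs_open {D : Set X} {f : X → ℝ} (hDo : IsOpen D) (hf : ContinuousOn f D) (v : X) (c : ℝ) :
    IsOpen (⋃ (t : ℝ) (_ : 0 < t),
      ((D ∩ (fun z : X => z + t • v) ⁻¹' D ∩ (fun z : X => z + (-t) • v) ⁻¹' D) ∩
        (fun z => dq f z v t - dq f z v (-t)) ⁻¹' Iio c)) := by
  refine isOpen_iUnion fun t => isOpen_iUnion fun ht => ?_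
  have hc1 : Continuous fun z : X => z + t • v := continuous_id.add continuous_const
  have hc2 : Continuous fun z : X => z + (-t) • v := continuous_id.add continuous_const
  set O : Set X := D ∩ (fun z : X => z + t • v) ⁻¹' D ∩ (fun z : X => z + (-t) • v) ⁻¹' D with hOdef
  have hO : IsOpen O := (hDo.inter (hDo.preimage hc1)).inter (hDo.preimage hc2)
  refine ContinuousOn.isOpen_inter_preimage ?_ hO isOpen_Iio
  have h0 : ContinuousOn f O := hf.mono (fun z hz => hz.1.1)
  have h1 : ContinuousOn (fun z : X => f (z + t • v)) O :=
    hf.comp hc1.continuousOn (fun z hz => hz.1.2)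
  have h2 : ContinuousOn (fun z : X => f (z + (-t) • v)) O :=
    hf.comp hc2.continuousOn (fun z hz => hz.2)
  show ContinuousOn (fun z : X => (f (z + t • v) - f z) / t - (f (z + (-t) • v) - f z) / (-t)) O
  exact ((h1.sub h0).div_const t).sub ((h2.sub h0).div_const (-t))

end MazurHelpers

theorem isWeakAsplund_of_separable_baire (X : Type*) [AddCommGroup X] [Module ℝ X]
    [TopologicalSpace X] [IsTopologicalAddGroup X] [ContinuousSMul ℝ X]
    [SeparableSpace X] [BaireSpace X] : IsWeakAsplund X := by
  intro D f hne hDo hDconv hfc hfconv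
  obtain ⟨u, hu⟩ := TopologicalSpace.exists_dense_seq X
  set GS : X → ℕ → Set X := fun v n => ⋃ (t : ℝ) (_ : 0 < t),
    ((D ∩ (fun z : X => z + t • v) ⁻¹' D ∩ (fun z : X => z + (-t) • v) ⁻¹' D) ∩
      (fun z => dq f z v t - dq f z v (-t)) ⁻¹' Iio (1/((n:ℝ)+1))) with hGSdef
  have hGSo : ∀ v n, IsOpen (GS v n) := fun v n => gs_open hDo hfc v _
  have hGSmem : ∀ v n z, z ∈ GS v n ↔ ∃ t > 0, (z ∈ D ∧ z + t • v ∈ D) ∧ z + (-t) • v ∈ D ∧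
      dq f z v t - dq f z v (-t) < 1/((n:ℝ)+1) := by
    intro v n z
    simp only [hGSdef, mem_iUnion, mem_inter_iff, mem_preimage, mem_Iio, exists_prop]
    tauto
  have hGSd : ∀ v n (O : Set X), IsOpen O → (O ∩ D).Nonempty → (O ∩ GS v n).Nonempty := by
    intro v n O hO hone
    obtain ⟨z, hz, t, ht, h1, h2, h3⟩ := gs_dense hDo hfconv v n hO hone
    exact ⟨z, hz.1, (hGSmem v n z).2 ⟨t, ht, ⟨hz.2, h1⟩, h2, h3⟩⟩
  set T : Set X := ⋂ q : ℕ × ℕ, (GS (u q.1) q.2 ∪ (closure D)ᶜ) with hTdef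
  have hTopen : ∀ q : ℕ × ℕ, IsOpen (GS (u q.1) q.2 ∪ (closure D)ᶜ) :=
    fun q => (hGSo _ _).union isClosed_closure.isOpen_compl
  have hTdense : ∀ q : ℕ × ℕ, Dense (GS (u q.1) q.2 ∪ (closure D)ᶜ) := by
    intro q
    rw [dense_iff_inter_open]
    intro O hO hOne
    by_cases h : (O ∩ D).Nonempty
    · obtain ⟨z, hz1, hz2⟩ := hGSd _ _ O hO h
      exact ⟨z, hz1, Or.inl hz2⟩
    · obtain ⟨z, hz⟩ := hOne
      refine ⟨z, hz, Or.inr fun hcl => ?_⟩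
      rw [mem_closure_iff] at hcl
      exact h (hcl O hO hz)
  have hT : Dense T := dense_iInter_of_isOpen hTopen hTdense
  have hsubD : ∀ z ∈ D ∩ T, ∀ k n, z ∈ GS (u k) n := by
    intro z hz k n
    rcases mem_iInter.1 hz.2 (k, n) with h | h
    · exact h
    · exact absurd (subset_closure hz.1) h
  refine ⟨D ∩ T, inter_subset_left, ?_, ?_, ?_⟩
  · have heq : (Subtype.val ⁻¹' (D ∩ T) : Set D) =
        ⋂ q : ℕ × ℕ, Subtype.val ⁻¹' (GS (u q.1) q.2 ∪ (closure D)ᶜ) := by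
      ext ⟨z, hz⟩
      simp only [mem_preimage, mem_inter_iff, mem_iInter, hTdef]
      exact ⟨fun h q => h.2 q, fun h => ⟨hz, fun q => h q⟩⟩
    rw [heq]
    exact IsGδ.iInter fun q => ((hTopen q).preimage continuous_subtype_val).isGδ
  · rw [dense_iff_inter_open]
    intro O' hO' hO'ne
    obtain ⟨O, hO, rfl⟩ := isOpen_induced_iff.1 hO'
    obtain ⟨⟨z₀, hz₀D⟩, hz₀O⟩ := hO'ne
    obtain ⟨w, hw⟩ := hT.inter_open_nonempty (O ∩ D) (hO.inter hDo) ⟨z₀, hz₀O, hz₀D⟩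
    exact ⟨⟨w, hw.1.2⟩, hw.1.1, hw.1.2, hw.2⟩
  · intro x hx
    have hxD : x ∈ D := hx.1
    have hgood : ∀ k n, x ∈ GS (u k) n := hsubD x hx
    set T' : X → Set ℝ := fun v => {t : ℝ | 0 < t ∧ x + t • v ∈ D} with hT'def
    set S : X → Set ℝ := fun v => (fun t => dq f x v t) '' T' v with hSdef
    set p : X → ℝ := fun v => sInf (S v) with hpdef
    have hrad : ∀ v : X, ∃ r > 0, ∀ t : ℝ, |t| < r → x + t • v ∈ D :=
      fun v => exists_radius hDo hxD v
    have hT'ne : ∀ v, (T' v).Nonempty := by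
      intro v
      obtain ⟨r, hr, hrD⟩ := hrad v
      exact ⟨r/2, by positivity, hrD _ (by rw [abs_of_nonneg (by positivity)]; linarith)⟩
    have hSne : ∀ v, (S v).Nonempty := fun v => (hT'ne v).image _
    have hbdd : ∀ v, BddBelow (S v) := by
      intro v
      obtain ⟨r, hr, hrD⟩ := hrad v
      refine ⟨dq f x v (-(r/2)), ?_⟩
      rintro y ⟨t, ⟨ht, htD⟩, rfl⟩
      have hmem : x + (-(r/2)) • v ∈ D :=
        hrD _ (by rw [abs_neg, abs_of_nonneg (by positivity)]; linarith)
      exact dq_mono hfconv hxD hmem htD (by norm_num; positivity) ht.ne' (by linarith)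
    have hple : ∀ v, ∀ t ∈ T' v, p v ≤ dq f x v t :=
      fun v t ht => csInf_le (hbdd v) ⟨t, ht, rfl⟩
    have hpge : ∀ v, ∀ s : ℝ, 0 < s → x + (-s) • v ∈ D → dq f x v (-s) ≤ p v := by
      intro v s hs hmem
      refine le_csInf (hSne v) ?_
      rintro y ⟨t, ⟨ht, htD⟩, rfl⟩
      exact dq_mono hfconv hxD hmem htD (by norm_num; positivity) ht.ne' (by linarith)
    have hplt : ∀ v, ∀ ε : ℝ, 0 < ε → ∃ t ∈ T' v, dq f x v t < p v + ε := by
      intro v ε hε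
      obtain ⟨y, hy, hylt⟩ := exists_lt_of_csInf_lt (hSne v) (lt_add_of_pos_right (p v) hε)
      obtain ⟨t, ht, rfl⟩ := hy
      exact ⟨t, ht, hylt⟩
    have hps : ∀ v : X, 0 ≤ p v + p (-v) := by
      intro v
      have h1 : -p (-v) ≤ p v := by
        refine le_csInf (hSne v) ?_
        rintro y ⟨t, ⟨ht, htD⟩, rfl⟩
        have hmem' : x + (-t) • (-v) ∈ D := by rwa [neg_smul_neg]
        have h2 : dq f x (-v) (-t) ≤ p (-v) := hpge (-v) t ht hmem'
        have h3 : dq f x (-v) (-t) = - dq f x v t := by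
          rw [dq_neg f x v (-t), neg_neg]
        linarith
      linarith
    have hgood0 : ∀ k, p (u k) + p (-(u k)) ≤ 0 := by
      intro k
      by_contra hpos
      push_neg at hpos
      obtain ⟨n, hn⟩ := exists_nat_one_div_lt hpos
      obtain ⟨t, ht, ⟨hxD', h1⟩, h2, h3⟩ := (hGSmem (u k) n x).1 (hgood k n)
      have hp1 : p (u k) ≤ dq f x (u k) t := hple _ t ⟨ht, h1⟩
      have hp2 : p (-(u k)) ≤ dq f x (-(u k)) t := by
        refine hple _ t ⟨ht, ?_⟩
        rwa [smul_neg, ← neg_smul]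
      have h4 : dq f x (-(u k)) t = - dq f x (u k) (-t) := dq_neg f x (u k) t
      linarith
    have hmemhalf : ∀ (a b : X) (t : ℝ), x + (2*t) • a ∈ D → x + (2*t) • b ∈ D →
        x + t • (a+b) ∈ D := by
      intro a b t ha hb
      have h := hDconv ha hb (by norm_num : (0:ℝ) ≤ 1/2) (by norm_num : (0:ℝ) ≤ 1/2)
        (by norm_num : (1/2 : ℝ) + 1/2 = 1)
      have heq : (1/2 : ℝ) • (x + (2*t) • a) + (1/2 : ℝ) • (x + (2*t) • b) = x + t • (a+b) := by
        module
      rwa [heq] at h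
    have hsub : ∀ a b : X, p (a+b) ≤ p a + p b := by
      intro a b
      refine le_of_forall_pos_le_add ?_
      intro ε hε
      obtain ⟨t₁, ⟨ht₁, ht₁D⟩, hlt₁⟩ := hplt a (ε/2) (by positivity)
      obtain ⟨t₂, ⟨ht₂, ht₂D⟩, hlt₂⟩ := hplt b (ε/2) (by positivity)
      set t : ℝ := min t₁ t₂ / 2 with htd
      have ht : 0 < t := by rw [htd]; positivity
      have h2t1 : 2*t ≤ t₁ := by rw [htd]; have := min_le_left t₁ t₂; linarith
      have h2t2 : 2*t ≤ t₂ := by rw [htd]; have := min_le_right t₁ t₂; linarith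
      have hma : x + (2*t) • a ∈ D := mem_of_seg hDconv (by positivity) h2t1 hxD ht₁D
      have hmb : x + (2*t) • b ∈ D := mem_of_seg hDconv (by positivity) h2t2 hxD ht₂D
      have hmab : x + t • (a+b) ∈ D := hmemhalf a b t hma hmb
      have key := dq_add_le hfconv ht hma hmb
      have hm1 : dq f x a (2*t) ≤ dq f x a t₁ :=
        dq_mono hfconv hxD hma ht₁D (by positivity : (0:ℝ) < 2*t).ne' ht₁.ne' h2t1
      have hm2 : dq f x b (2*t) ≤ dq f x b t₂ :=
        dq_mono hfconv hxD hmb ht₂D (by positivity : (0:ℝ) < 2*t).ne' ht₂.ne' h2t2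
      have hpab : p (a+b) ≤ dq f x (a+b) t := hple _ t ⟨ht, hmab⟩
      linarith
    have hhom_le : ∀ c : ℝ, 0 < c → ∀ v, p (c • v) ≤ c * p v := by
      intro c hc v
      refine le_of_forall_pos_le_add ?_
      intro ε hε
      obtain ⟨t, ⟨ht, htD⟩, hlt⟩ := hplt v (ε/c) (by positivity)
      have hmem' : t/c ∈ T' (c • v) := by
        refine ⟨by positivity, ?_⟩
        rw [smul_smul, div_mul_cancel₀ _ hc.ne']
        exact htD
      have heqq : dq f x (c • v) (t/c) = c * dq f x v t := by
        rw [dq, dq, smul_smul, div_mul_cancel₀ _ hc.ne']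
        rw [div_div_eq_mul_div, mul_comm, mul_div_assoc]
      have h1 : p (c • v) ≤ dq f x (c • v) (t/c) := hple _ _ hmem'
      have h2 : c * dq f x v t ≤ c * (p v + ε/c) := mul_le_mul_of_nonneg_left hlt.le hc.le
      have h3 : c * (p v + ε/c) = c * p v + c * (ε/c) := by ring
      have h4 : c * (ε/c) = ε := by field_simp
      linarith
    have hsmall : ∀ ε : ℝ, 0 < ε → ∃ W ∈ 𝓝 (0:X), ∀ w ∈ W, p w < ε := by
      intro ε hε
      have hcf : ContinuousAt f x := hfc.continuousAt (hDo.mem_nhds hxD)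
      have hV : {z | f z < f x + ε} ∈ 𝓝 x := hcf (Iio_mem_nhds (lt_add_of_pos_right _ hε))
      have hVD : D ∩ {z | f z < f x + ε} ∈ 𝓝 x := Filter.inter_mem (hDo.mem_nhds hxD) hV
      have haddc : Continuous fun w : X => x + w := continuous_const.add continuous_id
      have hW : (fun w : X => x + w) ⁻¹' (D ∩ {z | f z < f x + ε}) ∈ 𝓝 (0:X) := by
        apply haddc.continuousAt.preimage_mem_nhds
        simpa using hVD
      refine ⟨_, hW, ?_⟩
      intro w hw
      have h1 : x + (1:ℝ) • w ∈ D := by rw [one_smul]; exact hw.1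
      have h2 : p w ≤ dq f x w 1 := hple _ 1 ⟨one_pos, h1⟩
      have h3 : dq f x w 1 = f (x + w) - f x := by rw [dq, one_smul, div_one]
      have h4 : f (x + w) < f x + ε := hw.2
      linarith
    have hpcont : Continuous p := by
      rw [continuous_iff_continuousAt]
      intro v₀
      rw [ContinuousAt, Metric.tendsto_nhds]
      intro ε hε
      obtain ⟨W, hW, hWp⟩ := hsmall ε hε
      have hev : {v : X | v - v₀ ∈ W ∧ v₀ - v ∈ W} ∈ 𝓝 v₀ := by
        have hc1 : ContinuousAt (fun v : X => v - v₀) v₀ :=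
          (continuous_id.sub continuous_const).continuousAt
        have hc2 : ContinuousAt (fun v : X => v₀ - v) v₀ :=
          (continuous_const.sub continuous_id).continuousAt
        have e1 : (fun v : X => v - v₀) ⁻¹' W ∈ 𝓝 v₀ := hc1.preimage_mem_nhds (by simpa using hW)
        have e2 : (fun v : X => v₀ - v) ⁻¹' W ∈ 𝓝 v₀ := hc2.preimage_mem_nhds (by simpa using hW)
        exact Filter.inter_mem e1 e2
      filter_upwards [hev] with v hv
      have e1 : v₀ + (v - v₀) = v := by abel
      have e2 : v + (v₀ - v) = v₀ := by abel
      have h1 : p v ≤ p v₀ + p (v - v₀) := by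
        have := hsub v₀ (v - v₀); rwa [e1] at this
      have h2 : p v₀ ≤ p v + p (v₀ - v) := by
        have := hsub v (v₀ - v); rwa [e2] at this
      have h3 : p (v - v₀) < ε := hWp _ hv.1
      have h4 : p (v₀ - v) < ε := hWp _ hv.2
      rw [Real.dist_eq, abs_sub_lt_iff]
      constructor <;> linarith
    have h0 : ∀ v : X, p v + p (-v) = 0 := by
      have hcont2 : Continuous fun v : X => p v + p (-v) := hpcont.add (hpcont.comp continuous_neg)
      have hclosed : IsClosed {v : X | p v + p (-v) = 0} := isClosed_eq hcont2 continuous_const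
      have hrange : range u ⊆ {v : X | p v + p (-v) = 0} := by
        rintro _ ⟨k, rfl⟩
        exact le_antisymm (hgood0 k) (hps (u k))
      have hcl := hclosed.closure_subset_iff.2 hrange
      rw [hu.closure_eq] at hcl
      exact fun v => hcl (mem_univ v)
    have hp0 : p 0 = 0 := by have := h0 0; rw [neg_zero] at this; linarith
    have hpneg : ∀ v : X, p (-v) = - p v := by intro v; have := h0 v; linarith
    have hpos : ∀ c : ℝ, 0 < c → ∀ v, p (c • v) = c * p v := by
      intro c hc v
      refine le_antisymm (hhom_le c hc v) ?_
      have h1 : p v ≤ c⁻¹ * p (c • v) := by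
        have h2 := hhom_le c⁻¹ (by positivity) (c • v)
        rwa [smul_smul, inv_mul_cancel₀ hc.ne', one_smul] at h2
      calc c * p v ≤ c * (c⁻¹ * p (c • v)) := mul_le_mul_of_nonneg_left h1 hc.le
        _ = p (c • v) := by field_simp
    have hhom : ∀ (c : ℝ) (v : X), p (c • v) = c * p v := by
      intro c v
      rcases lt_trichotomy c 0 with hc | hc | hc
      · have h1 : c • v = (-c) • (-v) := by rw [neg_smul, smul_neg, neg_neg]
        rw [h1, hpos (-c) (by linarith) (-v), hpneg]
        ring
      · rw [hc, zero_smul, hp0]; ring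
      · exact hpos c hc v
    have haddp : ∀ a b : X, p (a + b) = p a + p b := by
      intro a b
      refine le_antisymm (hsub a b) ?_
      have h1 := hsub (-a) (-b)
      rw [← neg_add] at h1
      rw [hpneg, hpneg, hpneg] at h1
      linarith
    refine ⟨⟨⟨⟨p, haddp⟩, fun c v => by simpa using hhom c v⟩, hpcont⟩, ?_⟩
    intro v ε hε
    obtain ⟨t₁, ⟨ht₁, ht₁D⟩, hlt₁⟩ := hplt v ε hε
    obtain ⟨t₂, ⟨ht₂, ht₂D⟩, hlt₂⟩ := hplt (-v) ε hε
    refine ⟨min t₁ t₂, lt_min ht₁ ht₂, ?_⟩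
    intro t habs hlt
    have htne : t ≠ 0 := fun h => by rw [h] at habs; simp at habs
    show |(f (x + t • v) - f x) / t - p v| < ε
    have hdqeq : (f (x + t • v) - f x) / t = dq f x v t := rfl
    rw [hdqeq]
    rcases htne.lt_or_gt with hneg | hpos2
    · have habs' : |t| = -t := abs_of_neg hneg
      have hs'pos : 0 < -t := by linarith
      have hs't₂ : -t ≤ t₂ := by
        rw [habs'] at hlt
        have := min_le_right t₁ t₂; linarith
      have hmem' : x + (-t) • (-v) ∈ D := mem_of_seg hDconv hs'pos hs't₂ hxD ht₂D
      have hp1 : p (-v) ≤ dq f x (-v) (-t) := hple _ _ ⟨hs'pos, hmem'⟩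
      have hp2 : dq f x (-v) (-t) ≤ dq f x (-v) t₂ :=
        dq_mono hfconv hxD hmem' ht₂D hs'pos.ne' ht₂.ne' hs't₂
      have heq2 : dq f x (-v) (-t) = - dq f x v t := by
        rw [dq_neg f x v (-t), neg_neg]
      have hpv : p v = - p (-v) := by have := hpneg v; linarith
      rw [abs_sub_lt_iff]
      constructor <;> linarith
    · have habs' : |t| = t := abs_of_pos hpos2
      have htt₁ : t ≤ t₁ := by
        rw [habs'] at hlt
        have := min_le_left t₁ t₂; linarith
      have hmem' : x + t • v ∈ D := mem_of_seg hDconv hpos2 htt₁ hxD ht₁D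
      have hp1 : p v ≤ dq f x v t := hple _ _ ⟨hpos2, hmem'⟩
      have hp2 : dq f x v t ≤ dq f x v t₁ :=
        dq_mono hfconv hxD hmem' ht₁D hpos2.ne' ht₁.ne' htt₁
      rw [abs_sub_lt_iff]
      constructor <;> linarith

theorem baireSpace_of_completelyMetrizable {Y : Type*} [t : TopologicalSpace Y]
    (hY : CompletelyMetrizable Y) : BaireSpace Y := by
  obtain ⟨m, hm, hcm⟩ := hY
  rw [← hm]
  letI := m
  haveI := hcm
  exact @BaireSpace.of_completelyPseudoMetrizable Y m.toUniformSpace.toTopologicalSpace inferInstance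

theorem secondCountable_of_completelyMetrizable {Y : Type*} [t : TopologicalSpace Y]
    [SeparableSpace Y] (hY : CompletelyMetrizable Y) : SecondCountableTopology Y := by
  obtain ⟨m, hm, hcm⟩ := hY
  haveI hsep : @SeparableSpace Y m.toUniformSpace.toTopologicalSpace := by
    rw [hm]; infer_instance
  rw [← hm]
  letI := m
  exact UniformSpace.secondCountable_of_separable Y

/-- If `E` is a separable Baire topological linear space and `Y` is a separable Fréchet space
(a separable completely metrizable real locally convex space), then `E × Y` is Weak Asplund. -/
theorem weakAsplund_prod_separable_frechet (E : Type*) [AddCommGroup E] [Module ℝ E]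
    [TopologicalSpace E] [IsTopologicalAddGroup E] [ContinuousSMul ℝ E] [T2Space E]
    [SeparableSpace E] [BaireSpace E]
    (Y : Type*) [AddCommGroup Y] [Module ℝ Y] [TopologicalSpace Y] [IsTopologicalAddGroup Y]
    [ContinuousSMul ℝ Y] [LocallyConvexSpace ℝ Y] [T2Space Y] [SeparableSpace Y]
    (hY : CompletelyMetrizable Y) :
    IsWeakAsplund (E × Y) := by
  haveI : BaireSpace Y := baireSpace_of_completelyMetrizable hY
  haveI : SecondCountableTopology Y := secondCountable_of_completelyMetrizable hY
  haveI : BaireSpace (E × Y) := baireSpace_prod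
  exact isWeakAsplund_of_separable_baire (E × Y)
end

section
/- Let X be a Fréchet space (completely metrizable real locally convex space), Y a regular (T₃) real topological vector space, and T : X → Y a continuous linear open surjection. If X is Weak Asplund, then Y is Weak Asplund. -/
open Filter Topology Bornology TopologicalSpace

section KeyConstruction

set_option linter.unusedSectionVars false

variable {X Y : Type*} [MetricSpace X]

/-- The open subset of `Y` associated to a "node" `(x, r)`. -/
private def VV (T : X → Y) (p : X × ℝ) : Set Y := T '' Metric.ball p.1 (p.2 / 2)

private def ValidP (G : ℕ → Set X) (n : ℕ) (p : X × ℝ) : Prop :=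
  0 < p.2 ∧ p.2 ≤ (1/2 : ℝ) ^ n ∧ Metric.closedBall p.1 p.2 ⊆ G n

private def ChildP (T : X → Y) (p q : X × ℝ) : Prop :=
  dist q.1 p.1 < p.2 / 2 ∧ q.2 ≤ p.2 / 8 ∧ VV T q ⊆ VV T p

variable [TopologicalSpace Y]

private lemma exists_maxDisj (T : X → Y) (C : Set (X × ℝ)) :
    ∃ D, D ⊆ C ∧ (∀ p ∈ D, ∀ q ∈ D, p ≠ q → Disjoint (VV T p) (VV T q)) ∧
      ∀ q ∈ C, (∀ p ∈ D, Disjoint (VV T p) (VV T q)) → q ∈ D := by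
  have hub : ∀ c ⊆ {D : Set (X × ℝ) | D ⊆ C ∧
      ∀ p ∈ D, ∀ q ∈ D, p ≠ q → Disjoint (VV T p) (VV T q)}, IsChain (· ⊆ ·) c →
      ∃ ub ∈ {D : Set (X × ℝ) | D ⊆ C ∧
        ∀ p ∈ D, ∀ q ∈ D, p ≠ q → Disjoint (VV T p) (VV T q)}, ∀ s ∈ c, s ⊆ ub := by
    intro c hcS hchain
    refine ⟨⋃₀ c, ⟨Set.sUnion_subset fun s hs => (hcS hs).1, ?_⟩,
      fun s hs => Set.subset_sUnion_of_mem hs⟩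
    intro p hp q hq hne
    obtain ⟨s, hs, hps⟩ := hp
    obtain ⟨s', hs', hqs⟩ := hq
    rcases hchain.total hs hs' with h | h
    · exact (hcS hs').2 p (h hps) q hqs hne
    · exact (hcS hs).2 p hps q (h hqs) hne
  obtain ⟨m, hm⟩ := zorn_subset
    {D : Set (X × ℝ) | D ⊆ C ∧ ∀ p ∈ D, ∀ q ∈ D, p ≠ q → Disjoint (VV T p) (VV T q)} hub
  refine ⟨m, hm.prop.1, hm.prop.2, fun q hqC hdisj => ?_⟩
  by_contra hq
  have hmem : insert q m ∈
      {D : Set (X × ℝ) | D ⊆ C ∧ ∀ p ∈ D, ∀ q ∈ D, p ≠ q → Disjoint (VV T p) (VV T q)} := by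
    refine ⟨Set.insert_subset hqC hm.prop.1, ?_⟩
    intro a ha b hb hne
    rcases Set.mem_insert_iff.mp ha with ha' | ha'
    · rcases Set.mem_insert_iff.mp hb with hb' | hb'
      · exact absurd (ha'.trans hb'.symm) hne
      · exact ha' ▸ (hdisj b hb').symm
    · rcases Set.mem_insert_iff.mp hb with hb' | hb'
      · exact hb' ▸ hdisj a ha'
      · exact hm.prop.2 a ha' b hb' hne
  exact hq (hm.2 hmem (Set.subset_insert q m) (Set.mem_insert q m))

private noncomputable def maxDisj (T : X → Y) (C : Set (X × ℝ)) : Set (X × ℝ) :=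
  (exists_maxDisj T C).choose

private lemma maxDisj_subset (T : X → Y) (C : Set (X × ℝ)) : maxDisj T C ⊆ C :=
  (exists_maxDisj T C).choose_spec.1

private lemma maxDisj_pairwise (T : X → Y) (C : Set (X × ℝ)) :
    ∀ p ∈ maxDisj T C, ∀ q ∈ maxDisj T C, p ≠ q → Disjoint (VV T p) (VV T q) :=
  (exists_maxDisj T C).choose_spec.2.1

private lemma maxDisj_max (T : X → Y) (C : Set (X × ℝ)) :
    ∀ q ∈ C, (∀ p ∈ maxDisj T C, Disjoint (VV T p) (VV T q)) → q ∈ maxDisj T C :=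
  (exists_maxDisj T C).choose_spec.2.2

private noncomputable def levels (T : X → Y) (G : ℕ → Set X) : ℕ → Set (X × ℝ)
  | 0 => maxDisj T {p | ValidP G 0 p}
  | n + 1 => ⋃ p ∈ levels T G n, maxDisj T {q | ValidP G (n+1) q ∧ ChildP T p q}

private lemma key_construction [CompleteSpace X] [T2Space Y]
    (T : X → Y) (hc : Continuous T) (ho : IsOpenMap T)
    (U : Set X) (hU : IsOpen U) (G : ℕ → Set X)
    (hGo : ∀ n, IsOpen (G n)) (hGU : ∀ n, G n ⊆ U) (hGd : ∀ n, U ⊆ closure (G n)) :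
    ∃ H : ℕ → Set Y, (∀ n, IsOpen (H n)) ∧ (∀ n, T '' U ⊆ closure (H n)) ∧
      (⋂ n, H n) ⊆ T '' (U ∩ ⋂ n, G n) := by
  classical
  have hVopen : ∀ p : X × ℝ, IsOpen (VV T p) := fun p => ho _ Metric.isOpen_ball
  set A : ℕ → Set (X × ℝ) := levels T G with hA
  have hA0 : A 0 = maxDisj T {p | ValidP G 0 p} := rfl
  have hAs : ∀ n, A (n+1) = ⋃ p ∈ A n, maxDisj T {q | ValidP G (n+1) q ∧ ChildP T p q} :=
    fun n => rfl
  -- every node is valid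
  have hValidA : ∀ n, ∀ p ∈ A n, ValidP G n p := by
    intro n
    cases n with
    | zero => exact fun p hp => maxDisj_subset T _ hp
    | succ n =>
      intro q hq
      rw [hAs] at hq
      obtain ⟨p, _, hqF⟩ := Set.mem_iUnion₂.mp hq
      exact (maxDisj_subset T _ hqF).1
  have hParent : ∀ n, ∀ q ∈ A (n+1), ∃ p ∈ A n, ChildP T p q := by
    intro n q hq
    rw [hAs] at hq
    obtain ⟨p, hp, hqF⟩ := Set.mem_iUnion₂.mp hq
    exact ⟨p, hp, (maxDisj_subset T _ hqF).2⟩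
  -- pairwise disjointness of each level
  have hPair : ∀ n, ∀ p ∈ A n, ∀ q ∈ A n, p ≠ q → Disjoint (VV T p) (VV T q) := by
    intro n
    induction n with
    | zero => exact maxDisj_pairwise T _
    | succ n ih =>
      intro p' hp' q' hq' hne
      rw [hAs] at hp' hq'
      obtain ⟨p, hp, hp'F⟩ := Set.mem_iUnion₂.mp hp'
      obtain ⟨q, hq, hq'F⟩ := Set.mem_iUnion₂.mp hq'
      by_cases hpq : p = q
      · subst hpq
        exact maxDisj_pairwise T _ p' hp'F q' hq'F hne
      · exact ((ih p hp q hq hpq).mono (maxDisj_subset T _ hp'F).2.2.2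
          (maxDisj_subset T _ hq'F).2.2.2)
  -- construction of a node inside a given open target
  have hnode : ∀ (n : ℕ) (z : X) (W : Set Y) (S : Set X) (ρ : ℝ), 0 < ρ → IsOpen W →
      IsOpen S → z ∈ S → S ⊆ U → T z ∈ W →
      ∃ q : X × ℝ, ValidP G n q ∧ q.1 ∈ S ∧ q.2 ≤ ρ ∧ VV T q ⊆ W ∧ T q.1 ∈ VV T q := by
    intro n z W S ρ hρ hW hS hzS hSU hzW
    have hO' : IsOpen (S ∩ T ⁻¹' W) := hS.inter (hW.preimage hc)
    have hzO' : z ∈ S ∩ T ⁻¹' W := ⟨hzS, hzW⟩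
    obtain ⟨x', hx'O, hx'G⟩ := mem_closure_iff.mp (hGd n (hSU hzS)) _ hO' hzO'
    have hopen : IsOpen ((S ∩ T ⁻¹' W) ∩ G n) := hO'.inter (hGo n)
    obtain ⟨r, hr, hball⟩ := (Metric.nhds_basis_closedBall.mem_iff).mp
      (hopen.mem_nhds ⟨hx'O, hx'G⟩)
    set r' : ℝ := min r (min ρ ((1/2 : ℝ) ^ n)) with hr'
    have hr'pos : 0 < r' := lt_min hr (lt_min hρ (by positivity))
    have hsub : Metric.closedBall x' r' ⊆ (S ∩ T ⁻¹' W) ∩ G n :=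
      (Metric.closedBall_subset_closedBall (min_le_left _ _)).trans hball
    refine ⟨(x', r'), ⟨hr'pos, (min_le_right _ _).trans (min_le_right _ _),
      fun w hw => (hsub hw).2⟩, hx'O.1, (min_le_right _ _).trans (min_le_left _ _), ?_, ?_⟩
    · intro y hy
      obtain ⟨w, hw, rfl⟩ := hy
      have : w ∈ Metric.closedBall x' r' :=
        Metric.ball_subset_closedBall (Metric.ball_subset_ball (by linarith) hw)
      exact (hsub this).1.2
    · exact ⟨x', Metric.mem_ball_self (by positivity), rfl⟩
  -- density of the levels
  have hDense : ∀ n, T '' U ⊆ closure (⋃ p ∈ A n, VV T p) := by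
    intro n
    induction n with
    | zero =>
      rintro y ⟨z, hzU, rfl⟩
      rw [mem_closure_iff]
      intro O hO hyO
      obtain ⟨q, hqV, _, _, hqW, hqne⟩ := hnode 0 z O U 1 one_pos hO hU hzU subset_rfl hyO
      by_cases hq : q ∈ A 0
      · exact ⟨T q.1, hqW hqne, Set.mem_iUnion₂.mpr ⟨q, hq, hqne⟩⟩
      · have hnall : ¬ ∀ p ∈ A 0, Disjoint (VV T p) (VV T q) := fun hall =>
          hq (maxDisj_max T {p | ValidP G 0 p} q hqV (by rw [← hA0]; exact hall))
        push_neg at hnall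
        obtain ⟨p, hp, hnd⟩ := hnall
        obtain ⟨w, hwp, hwq⟩ := Set.not_disjoint_iff.mp hnd
        exact ⟨w, hqW hwq, Set.mem_iUnion₂.mpr ⟨p, hp, hwp⟩⟩
    | succ n ih =>
      intro y hy
      rw [mem_closure_iff]
      intro O hO hyO
      obtain ⟨w, hwO, hwH⟩ := mem_closure_iff.mp (ih hy) O hO hyO
      obtain ⟨p, hpA, hwV⟩ := Set.mem_iUnion₂.mp hwH
      obtain ⟨z, hzb, rfl⟩ := hwV
      have hpV := hValidA n p hpA
      have hSU : Metric.ball p.1 (p.2 / 2) ⊆ U := fun w hw => hGU n (hpV.2.2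
        (Metric.ball_subset_closedBall (Metric.ball_subset_ball (by linarith [hpV.1]) hw)))
      obtain ⟨q, hqV, hqS, hqρ, hqW, hqne⟩ := hnode (n+1) z (O ∩ VV T p)
        (Metric.ball p.1 (p.2 / 2)) (p.2 / 8) (by linarith [hpV.1])
        (hO.inter (hVopen p)) Metric.isOpen_ball hzb hSU ⟨hwO, ⟨z, hzb, rfl⟩⟩
      have hqC : q ∈ {q | ValidP G (n+1) q ∧ ChildP T p q} :=
        ⟨hqV, by simpa [Metric.mem_ball] using hqS, hqρ,
          fun y hy => (hqW hy).2⟩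
      by_cases hq : q ∈ maxDisj T {q | ValidP G (n+1) q ∧ ChildP T p q}
      · have hqA : q ∈ A (n+1) := by
          rw [hAs]; exact Set.mem_iUnion₂.mpr ⟨p, hpA, hq⟩
        exact ⟨T q.1, (hqW hqne).1, Set.mem_iUnion₂.mpr ⟨q, hqA, hqne⟩⟩
      · have hnall : ¬ ∀ p' ∈ maxDisj T {q | ValidP G (n+1) q ∧ ChildP T p q},
            Disjoint (VV T p') (VV T q) := fun hall =>
          hq (maxDisj_max T {q | ValidP G (n+1) q ∧ ChildP T p q} q hqC hall)
        push_neg at hnall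
        obtain ⟨p', hp', hnd⟩ := hnall
        obtain ⟨w', hwp', hwq'⟩ := Set.not_disjoint_iff.mp hnd
        have hp'A : p' ∈ A (n+1) := by
          rw [hAs]; exact Set.mem_iUnion₂.mpr ⟨p, hpA, hp'⟩
        exact ⟨w', (hqW hwq').1, Set.mem_iUnion₂.mpr ⟨p', hp'A, hwp'⟩⟩
  refine ⟨fun n => ⋃ p ∈ A n, VV T p,
    fun n => isOpen_iUnion fun p => isOpen_iUnion fun _ => hVopen p, hDense, ?_⟩
  -- the key inclusion
  intro y hy
  have hyn : ∀ n, ∃ p, p ∈ A n ∧ y ∈ VV T p := by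
    intro n
    obtain ⟨p, hp, h⟩ := Set.mem_iUnion₂.mp (Set.mem_iInter.mp hy n)
    exact ⟨p, hp, h⟩
  choose p hpA hpV using hyn
  have hval : ∀ n, ValidP G n (p n) := fun n => hValidA n (p n) (hpA n)
  have hch : ∀ n, ChildP T (p n) (p (n+1)) := by
    intro n
    obtain ⟨p', hp'A, hchild⟩ := hParent n (p (n+1)) (hpA (n+1))
    have hyp' : y ∈ VV T p' := hchild.2.2 (hpV (n+1))
    by_cases hne : p' = p n
    · exact hne ▸ hchild
    · exact absurd (Set.disjoint_left.mp (hPair n p' hp'A (p n) (hpA n) hne) hyp' (hpV n))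
        (fun h => h)
  have hz : ∀ n, ∃ z, z ∈ Metric.ball (p n).1 ((p n).2 / 2) ∧ T z = y := by
    intro n
    obtain ⟨z, hzb, hzT⟩ := hpV n
    exact ⟨z, hzb, hzT⟩
  choose z hzb hzT using hz
  have hnest : ∀ n, Metric.closedBall (p (n+1)).1 (p (n+1)).2 ⊆
      Metric.closedBall (p n).1 (p n).2 := by
    intro n w hw
    rw [Metric.mem_closedBall] at hw ⊢
    have h1 := (hch n).1
    have h2 := (hch n).2.1
    have h3 := (hval n).1
    calc dist w (p n).1 ≤ dist w (p (n+1)).1 + dist (p (n+1)).1 (p n).1 := dist_triangle _ _ _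
    _ ≤ (p n).2 := by linarith
  have hmono : ∀ n m, n ≤ m → Metric.closedBall (p m).1 (p m).2 ⊆
      Metric.closedBall (p n).1 (p n).2 := by
    intro n m h
    induction h with
    | refl => exact subset_rfl
    | step h ih => exact fun w hw => ih (hnest _ hw)
  have hzcb : ∀ n, z n ∈ Metric.closedBall (p n).1 (p n).2 := fun n =>
    Metric.ball_subset_closedBall (Metric.ball_subset_ball (by linarith [(hval n).1]) (hzb n))
  have hzin : ∀ n m, n ≤ m → z m ∈ Metric.closedBall (p n).1 (p n).2 :=
    fun n m h => hmono n m h (hzcb m)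
  have hcauchy : CauchySeq z := by
    rw [Metric.cauchySeq_iff]
    intro ε hε
    obtain ⟨N, hN⟩ := exists_pow_lt_of_lt_one (by linarith : (0:ℝ) < ε / 2)
      (by norm_num : (1/2 : ℝ) < 1)
    refine ⟨N, fun a ha b hb => ?_⟩
    have h1 : dist (z a) (p N).1 ≤ (p N).2 := Metric.mem_closedBall.mp (hzin N a ha)
    have h2 : dist (z b) (p N).1 ≤ (p N).2 := Metric.mem_closedBall.mp (hzin N b hb)
    have h3 : (p N).2 ≤ (1/2 : ℝ) ^ N := (hval N).2.1
    calc dist (z a) (z b) ≤ dist (z a) (p N).1 + dist (p N).1 (z b) := dist_triangle _ _ _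
    _ ≤ (p N).2 + (p N).2 := by rw [dist_comm (p N).1 (z b)]; linarith
    _ < ε := by linarith
  obtain ⟨x, hx⟩ := cauchySeq_tendsto_of_complete hcauchy
  have hxcb : ∀ n, x ∈ Metric.closedBall (p n).1 (p n).2 := by
    intro n
    refine Metric.isClosed_closedBall.mem_of_tendsto hx ?_
    exact Filter.eventually_atTop.mpr ⟨n, fun m hm => hzin n m hm⟩
  have hxG : ∀ n, x ∈ G n := fun n => (hval n).2.2 (hxcb n)
  have hTx : T x = y := by
    have h1 : Tendsto (T ∘ z) atTop (𝓝 (T x)) := (hc.tendsto x).comp hx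
    have h2 : Tendsto (T ∘ z) atTop (𝓝 y) := by
      have heq : (T ∘ z) = fun _ => y := funext hzT
      rw [heq]
      exact tendsto_const_nhds
    exact tendsto_nhds_unique h1 h2
  exact ⟨x, ⟨hGU 0 (hxG 0), Set.mem_iInter.mpr hxG⟩, hTx⟩

private lemma dense_iInter_of_openMap [CompleteSpace X]
    (T : X → Y) (hc : Continuous T) (ho : IsOpenMap T)
    (hsurj : Function.Surjective T) (H : ℕ → Set Y) (hHo : ∀ n, IsOpen (H n))
    (hHd : ∀ n, Dense (H n)) : Dense (⋂ n, H n) := by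
  have h1 : ∀ n, Dense (T ⁻¹' H n) := fun n => (hHd n).preimage ho
  have h2 : Dense (⋂ n, T ⁻¹' H n) :=
    dense_iInter_of_isOpen (fun n => (hHo n).preimage hc) h1
  rw [dense_iff_inter_open]
  intro O hO hOne
  obtain ⟨y, hy⟩ := hOne
  obtain ⟨x0, rfl⟩ := hsurj y
  obtain ⟨x, hxO, hxI⟩ := dense_iff_inter_open.mp h2 (T ⁻¹' O) (hO.preimage hc) ⟨x0, hy⟩
  exact ⟨T x, hxO, Set.mem_iInter.mpr fun n => Set.mem_iInter.mp hxI n⟩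

end KeyConstruction

private lemma gateaux_transfer {X Y : Type*} [AddCommGroup X] [Module ℝ X] [TopologicalSpace X]
    [AddCommGroup Y] [Module ℝ Y] [TopologicalSpace Y]
    (T : X →L[ℝ] Y) (hTopen : IsOpenMap T) (hTsurj : Function.Surjective T)
    (f : Y → ℝ) (x : X) (h : GateauxDiffAt (f ∘ T) x) : GateauxDiffAt f (T x) := by
  obtain ⟨L, hL⟩ := h
  have hker : ∀ v : X, T v = 0 → L v = 0 := by
    intro v hv
    by_contra hne
    have habs : 0 < |L v| := abs_pos.mpr hne
    obtain ⟨δ, hδ, hb⟩ := hL v |L v| habs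
    have ht1 : 0 < |δ/2| := by rw [abs_of_pos (by linarith)]; linarith
    have ht2 : |δ/2| < δ := by rw [abs_of_pos (by linarith)]; linarith
    have hb2 := hb (δ/2) ht1 ht2
    have heq : (f ∘ T) (x + (δ/2) • v) = (f ∘ T) x := by
      simp [Function.comp, map_add, map_smul, hv]
    rw [heq] at hb2
    simp only [sub_self, zero_div, zero_sub, abs_neg] at hb2
    exact absurd hb2 (lt_irrefl _)
  set s : Y → X := Function.surjInv hTsurj with hs
  have hTs : ∀ y, T (s y) = y := fun y => Function.surjInv_eq hTsurj y
  have hdiff : ∀ a b : X, T a = T b → L a = L b := by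
    intro a b hab
    have h0 : L (a - b) = 0 := hker _ (by rw [map_sub, hab, sub_self])
    rw [map_sub] at h0
    linarith
  have hMT : ∀ x' : X, L (s (T x')) = L x' := fun x' => hdiff _ _ (hTs (T x'))
  have hMcont : Continuous (fun y => L (s y)) := by
    rw [continuous_def]
    intro O hO
    have himg : (fun y => L (s y)) ⁻¹' O = T '' (L ⁻¹' O) := by
      ext y
      constructor
      · intro hy
        exact ⟨s y, hy, hTs y⟩
      · rintro ⟨a, ha, rfl⟩
        show L (s (T a)) ∈ O
        rw [hMT a]
        exact ha
    rw [himg]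
    exact hTopen _ (hO.preimage L.continuous)
  let M₀ : Y →ₗ[ℝ] ℝ :=
    { toFun := fun y => L (s y)
      map_add' := by
        intro a b
        have hT : T (s (a+b)) = T (s a + s b) := by rw [map_add, hTs, hTs, hTs]
        rw [hdiff _ _ hT, map_add]
      map_smul' := by
        intro c a
        have hT : T (s (c • a)) = T (c • s a) := by rw [map_smul, hTs, hTs]
        rw [hdiff _ _ hT, map_smul]
        simp }
  refine ⟨⟨M₀, hMcont⟩, fun w ε hε => ?_⟩
  obtain ⟨δ, hδ, hb⟩ := hL (s w) ε hε
  refine ⟨δ, hδ, fun t ht1 ht2 => ?_⟩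
  have key := hb t ht1 ht2
  have heq : T x + t • w = T (x + t • s w) := by rw [map_add, map_smul, hTs]
  rw [heq]
  show |(f (T (x + t • s w)) - f (T x)) / t - L (s w)| < ε
  exact key

/-- If `X` is a Fréchet space (completely metrizable real locally convex space), `Y` a regular
(T₃) real topological vector space, and `T : X → Y` a continuous linear open surjection, then
`X` Weak Asplund implies `Y` Weak Asplund. -/
theorem weakAsplund_of_openSurjection (X Y : Type*) [AddCommGroup X] [Module ℝ X]
    [TopologicalSpace X] [IsTopologicalAddGroup X] [ContinuousSMul ℝ X]
    [LocallyConvexSpace ℝ X] [T2Space X] (hX : CompletelyMetrizable X)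
    [AddCommGroup Y] [Module ℝ Y] [TopologicalSpace Y] [IsTopologicalAddGroup Y]
    [ContinuousSMul ℝ Y] [T3Space Y]
    (T : X →L[ℝ] Y) (hTopen : IsOpenMap T) (hTsurj : Function.Surjective T)
    (hWA : IsWeakAsplund X) :
    IsWeakAsplund Y := by
  obtain ⟨m, hm, hcomp⟩ := hX
  intro D f hDne hDopen hDconv hfc hfconv
  classical
  set U : Set X := T ⁻¹' D with hUdef
  have hUopen : IsOpen U := hDopen.preimage T.continuous
  have hUne : U.Nonempty := by
    obtain ⟨y, hy⟩ := hDne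
    obtain ⟨x, rfl⟩ := hTsurj y
    exact ⟨x, hy⟩
  have hUconv : Convex ℝ U := by
    intro a ha b hb μ ν hμ hν hμν
    show T (μ • a + ν • b) ∈ D
    rw [map_add, map_smul, map_smul]
    exact hDconv ha hb hμ hν hμν
  have hgc : ContinuousOn (f ∘ T) U := hfc.comp T.continuous.continuousOn (fun x hx => hx)
  have hgconv : ConvexOn ℝ U (f ∘ T) := by
    refine ⟨hUconv, fun a ha b hb μ ν hμ hν hμν => ?_⟩
    show f (T (μ • a + ν • b)) ≤ _
    rw [map_add, map_smul, map_smul]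
    exact hfconv.2 ha hb hμ hν hμν
  obtain ⟨GX, hGXsub, hGXgδ, hGXdense, hGXdiff⟩ := hWA U (f ∘ T) hUne hUopen hUconv hgc hgconv
  obtain ⟨S, hSopen, hScount, hSeq⟩ := hGXgδ
  have hS'ne : (insert (Set.univ : Set U) S).Nonempty := ⟨_, Set.mem_insert _ _⟩
  obtain ⟨e, he⟩ := (hScount.insert _).exists_eq_range hS'ne
  have heopen : ∀ n, IsOpen (e n) := by
    intro n
    have hmem : e n ∈ insert (Set.univ : Set U) S := by rw [he]; exact ⟨n, rfl⟩
    rcases Set.mem_insert_iff.mp hmem with h | h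
    · rw [h]; exact isOpen_univ
    · exact hSopen _ h
  have hpre : ∀ x : U, x ∈ (Subtype.val ⁻¹' GX : Set U) ↔ ∀ n, x ∈ e n := by
    intro x
    rw [hSeq]
    constructor
    · intro hx n
      have hmem : e n ∈ insert (Set.univ : Set U) S := by rw [he]; exact ⟨n, rfl⟩
      rcases Set.mem_insert_iff.mp hmem with h | h
      · rw [h]; trivial
      · exact Set.mem_sInter.mp hx _ h
    · intro hx t ht
      have hmem : t ∈ insert (Set.univ : Set U) S := Set.mem_insert_of_mem _ ht
      rw [he] at hmem
      obtain ⟨n, rfl⟩ := hmem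
      exact hx n
  choose O hOopen hOeq using fun n => isOpen_induced_iff.mp (heopen n)
  set G' : ℕ → Set X := fun n => O n ∩ U with hG'
  have hG'open : ∀ n, IsOpen (G' n) := fun n => (hOopen n).inter hUopen
  have hG'U : ∀ n, G' n ⊆ U := fun n => Set.inter_subset_right
  have hmemG' : ∀ (x : X) (hx : x ∈ U) (n : ℕ), x ∈ G' n ↔ (⟨x, hx⟩ : U) ∈ e n := by
    intro x hx n
    rw [← hOeq n]
    exact ⟨fun h => h.1, fun h => ⟨h, hx⟩⟩
  have hGXeq : GX = U ∩ ⋂ n, G' n := by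
    ext x
    constructor
    · intro hx
      have hxU : x ∈ U := hGXsub hx
      refine ⟨hxU, Set.mem_iInter.mpr fun n => ?_⟩
      exact (hmemG' x hxU n).mpr ((hpre ⟨x, hxU⟩).mp hx n)
    · rintro ⟨hxU, hxI⟩
      exact (hpre ⟨x, hxU⟩).mpr fun n => (hmemG' x hxU n).mp (Set.mem_iInter.mp hxI n)
  have hG'dense : ∀ n, U ⊆ closure (G' n) := by
    intro n x hx
    have hd : Dense (Subtype.val ⁻¹' (G' n) : Set U) := by
      refine hGXdense.mono ?_
      intro u hu
      show u.1 ∈ G' n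
      exact (hmemG' u.1 u.2 n).mpr ((hpre u).mp hu n)
    have h1 := closure_subtype.mp (hd ⟨x, hx⟩)
    rw [Subtype.image_preimage_coe, Set.inter_eq_self_of_subset_right (hG'U n)] at h1
    exact h1
  -- transport to the metric topology and apply the key construction
  have hTc' : @Continuous X Y m.toUniformSpace.toTopologicalSpace _ T := by
    rw [hm]; exact T.continuous
  have hTo' : @IsOpenMap X Y m.toUniformSpace.toTopologicalSpace _ T := by
    rw [hm]; exact hTopen
  have hUopen' : IsOpen[m.toUniformSpace.toTopologicalSpace] U := by rw [hm]; exact hUopen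
  have hG'open' : ∀ n, IsOpen[m.toUniformSpace.toTopologicalSpace] (G' n) := by
    intro n; rw [hm]; exact hG'open n
  have hG'dense' : ∀ n, U ⊆ @closure X m.toUniformSpace.toTopologicalSpace (G' n) := by
    intro n; rw [hm]; exact hG'dense n
  obtain ⟨H, hHo, hHd, hHsub⟩ := @key_construction X Y m _ hcomp _
    T hTc' hTo' U hUopen' G' hG'open' hG'U hG'dense'
  have hTU : T '' U = D := Set.image_preimage_eq D hTsurj
  set H' : ℕ → Set Y := (fun n => H n ∪ (closure D)ᶜ) with hH'
  have hH'o : ∀ n, IsOpen (H' n) := fun n => (hHo n).union isClosed_closure.isOpen_compl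
  have hH'd : ∀ n, Dense (H' n) := by
    intro n y
    by_cases hy : y ∈ closure D
    · have h1 : D ⊆ closure (H' n) := by
        intro d hd
        have hd' : d ∈ T '' U := by rw [hTU]; exact hd
        exact closure_mono Set.subset_union_left (hHd n hd')
      exact closure_minimal h1 isClosed_closure hy
    · exact subset_closure (Set.mem_union_right _ hy)
  have hYdense : Dense (⋂ n, H' n) :=
    @dense_iInter_of_openMap X Y m _ hcomp T hTc' hTo' hTsurj H' hH'o hH'd
  have hsub2 : D ∩ (⋂ n, H' n) ⊆ T '' GX := by
    rintro y ⟨hyD, hyH⟩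
    have hyH2 : y ∈ ⋂ n, H n := by
      refine Set.mem_iInter.mpr fun n => ?_
      rcases Set.mem_iInter.mp hyH n with h | h
      · exact h
      · exact absurd (subset_closure hyD) h
    have h2 := hHsub hyH2
    rwa [← hGXeq] at h2
  refine ⟨D ∩ ⋂ n, H' n, Set.inter_subset_left, ?_, ?_, ?_⟩
  · have hpreq : (Subtype.val ⁻¹' (D ∩ ⋂ n, H' n) : Set D) =
        ⋂ n, Subtype.val ⁻¹' (H' n) := by
      ext x
      constructor
      · intro h
        exact Set.mem_iInter.mpr fun n => Set.mem_iInter.mp h.2 n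
      · intro h
        exact ⟨x.2, Set.mem_iInter.mpr fun n => Set.mem_iInter.mp h n⟩
    rw [hpreq]
    exact IsGδ.iInter fun n => ((hH'o n).preimage continuous_subtype_val).isGδ
  · rw [dense_iff_inter_open]
    intro V hV hVne
    obtain ⟨O', hO', rfl⟩ := isOpen_induced_iff.mp hV
    obtain ⟨⟨y₀, hy₀D⟩, hy₀O⟩ := hVne
    obtain ⟨y, hyOD, hyI⟩ := dense_iff_inter_open.mp hYdense (O' ∩ D)
      (hO'.inter hDopen) ⟨y₀, hy₀O, hy₀D⟩
    exact ⟨⟨y, hyOD.2⟩, hyOD.1, ⟨hyOD.2, hyI⟩⟩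
  · intro y hy
    obtain ⟨x, hxGX, rfl⟩ := hsub2 hy
    exact gateaux_transfer T hTopen hTsurj f x (hGXdiff x hxGX)
end
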